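/- arXiv:1403.6016 — 4 statements merged into one kernel-verified Lean document; each statement's English description precedes it below -/
import Mathlib

section
/- Let ||·||_{D_1} and ||·||_{D_2} be D-norms on R^d with generators Z^{(1)} and Z^{(2)} defined on a common probability space. Then for every x ∈ R^d, ||x||_{D_1} ≤ ||x||_{D_2} + ||x||_∞ · E(max_{1≤i≤d} |Z_i^{(1)} − Z_i^{(2)}|). Consequently sup_{||x||_∞ ≤ r} | ||x||_{D_1} − ||x||_{D_2} | ≤ r · E(||Z^{(1)} − Z^{(2)}||_1) for all r ≥ 0. -/
open MeasureTheory

section Aux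

variable {Ω : Type*} [MeasurableSpace Ω] {μ : Measure Ω} {d : ℕ}

lemma aux_integrable_ciSup [Nonempty (Fin d)] {f : Fin d → Ω → ℝ}
    (hm : ∀ i, Measurable (f i)) (h : ∀ i, Integrable (f i) μ) :
    Integrable (fun ω => ⨆ i, f i ω) μ := by
  have hmeas : Measurable (fun ω => ⨆ i, f i ω) := Measurable.iSup hm
  refine Integrable.mono' (integrable_finset_sum Finset.univ (fun i _ => (h i).abs))
    hmeas.aestronglyMeasurable ?_
  filter_upwards with ω
  rw [Real.norm_eq_abs, abs_le]
  constructor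
  · obtain ⟨i0⟩ := (inferInstance : Nonempty (Fin d))
    refine le_trans ?_ (le_ciSup (Set.Finite.bddAbove (Set.finite_range _)) i0)
    calc -(∑ i, |f i ω|) ≤ -|f i0 ω| := by
          simp only [neg_le_neg_iff]
          exact Finset.single_le_sum (fun j _ => abs_nonneg (f j ω)) (Finset.mem_univ i0)
      _ ≤ f i0 ω := neg_abs_le _
  · exact ciSup_le fun i => le_trans (le_abs_self _)
      (Finset.single_le_sum (fun j _ => abs_nonneg (f j ω)) (Finset.mem_univ i))

end Aux

/-- Comparison of two D-norms via their generators on a common probability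
space: `‖x‖_{D₁} ≤ ‖x‖_{D₂} + ‖x‖_∞ E(max_i |Z¹_i − Z²_i|)`, and consequently
`sup_{‖x‖_∞ ≤ r} |‖x‖_{D₁} − ‖x‖_{D₂}| ≤ r · E(‖Z¹ − Z²‖₁)`. -/
theorem D_norm_lipschitz (d : ℕ) (hd : 0 < d)
    {Ω : Type*} [MeasurableSpace Ω] (μ : Measure Ω) [IsProbabilityMeasure μ]
    (Z₁ Z₂ : Ω → Fin d → ℝ)
    (hmeas₁ : ∀ i, Measurable fun ω => Z₁ ω i)
    (hmeas₂ : ∀ i, Measurable fun ω => Z₂ ω i)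
    (hpos₁ : ∀ ω i, 0 ≤ Z₁ ω i) (hpos₂ : ∀ ω i, 0 ≤ Z₂ ω i)
    (hint₁ : ∀ i, Integrable (fun ω => Z₁ ω i) μ)
    (hint₂ : ∀ i, Integrable (fun ω => Z₂ ω i) μ)
    (hexp₁ : ∀ i, ∫ ω, Z₁ ω i ∂μ = 1) (hexp₂ : ∀ i, ∫ ω, Z₂ ω i ∂μ = 1) :
    (∀ x : Fin d → ℝ,
      ∫ ω, ⨆ i, |x i| * Z₁ ω i ∂μ ≤ (∫ ω, ⨆ i, |x i| * Z₂ ω i ∂μ) +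
        (⨆ i, |x i|) * ∫ ω, ⨆ i, |Z₁ ω i - Z₂ ω i| ∂μ) ∧
    ∀ r : ℝ, 0 ≤ r → ∀ x : Fin d → ℝ, (⨆ i, |x i|) ≤ r →
      |(∫ ω, ⨆ i, |x i| * Z₁ ω i ∂μ) - ∫ ω, ⨆ i, |x i| * Z₂ ω i ∂μ| ≤
        r * ∫ ω, ∑ i, |Z₁ ω i - Z₂ ω i| ∂μ := by
  haveI : Nonempty (Fin d) := ⟨⟨0, hd⟩⟩
  have bdd : ∀ (f : Fin d → ℝ), BddAbove (Set.range f) :=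
    fun f => Set.Finite.bddAbove (Set.finite_range f)
  -- integrability facts
  have hIdiff : ∀ i, Integrable (fun ω => |Z₁ ω i - Z₂ ω i|) μ :=
    fun i => ((hint₁ i).sub (hint₂ i)).abs
  have hI1 : ∀ x : Fin d → ℝ, Integrable (fun ω => ⨆ i, |x i| * Z₁ ω i) μ := fun x =>
    aux_integrable_ciSup (fun i => (hmeas₁ i).const_mul _) (fun i => (hint₁ i).const_mul _)
  have hI2 : ∀ x : Fin d → ℝ, Integrable (fun ω => ⨆ i, |x i| * Z₂ ω i) μ := fun x =>
    aux_integrable_ciSup (fun i => (hmeas₂ i).const_mul _) (fun i => (hint₂ i).const_mul _)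
  have hId : Integrable (fun ω => ⨆ i, |Z₁ ω i - Z₂ ω i|) μ :=
    aux_integrable_ciSup (fun i => ((hmeas₁ i).sub (hmeas₂ i)).abs) hIdiff
  have hIsum : Integrable (fun ω => ∑ i, |Z₁ ω i - Z₂ ω i|) μ :=
    integrable_finset_sum _ (fun i _ => hIdiff i)
  -- main pointwise bound, generic in the two generators
  have key : ∀ (W₁ W₂ : Ω → Fin d → ℝ), (∀ ω i, 0 ≤ W₂ ω i) →
      ∀ (x : Fin d → ℝ) (ω : Ω),
      (⨆ i, |x i| * W₁ ω i) ≤ (⨆ i, |x i| * W₂ ω i) +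
        (⨆ i, |x i|) * (⨆ i, |W₁ ω i - W₂ ω i|) := by
    intro W₁ W₂ hpos x ω
    refine ciSup_le fun i => ?_
    have h1 : |x i| * W₁ ω i ≤ |x i| * W₂ ω i + |x i| * |W₁ ω i - W₂ ω i| := by
      have : W₁ ω i ≤ W₂ ω i + |W₁ ω i - W₂ ω i| := by
        have := le_abs_self (W₁ ω i - W₂ ω i); linarith
      nlinarith [abs_nonneg (x i)]
    refine h1.trans (add_le_add (le_ciSup (bdd fun j => |x j| * W₂ ω j) i) ?_)
    exact mul_le_mul (le_ciSup (bdd fun j => |x j|) i)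
      (le_ciSup (bdd fun j => |W₁ ω j - W₂ ω j|) i) (abs_nonneg _)
      (le_trans (abs_nonneg (x i)) (le_ciSup (bdd fun j => |x j|) i))
  have part1 : ∀ (W₁ W₂ : Ω → Fin d → ℝ),
      (∀ ω i, 0 ≤ W₂ ω i) →
      (∀ x : Fin d → ℝ, Integrable (fun ω => ⨆ i, |x i| * W₁ ω i) μ) →
      (∀ x : Fin d → ℝ, Integrable (fun ω => ⨆ i, |x i| * W₂ ω i) μ) →
      Integrable (fun ω => ⨆ i, |W₁ ω i - W₂ ω i|) μ →
      ∀ x : Fin d → ℝ,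
      ∫ ω, ⨆ i, |x i| * W₁ ω i ∂μ ≤ (∫ ω, ⨆ i, |x i| * W₂ ω i ∂μ) +
        (⨆ i, |x i|) * ∫ ω, ⨆ i, |W₁ ω i - W₂ ω i| ∂μ := by
    intro W₁ W₂ hpos h1 h2 hd' x
    have := integral_mono (h1 x) ((h2 x).add (hd'.const_mul (⨆ i, |x i|)))
      (fun ω => key W₁ W₂ hpos x ω)
    simp only [Pi.add_apply] at this
    rwa [integral_add (h2 x) (hd'.const_mul _), integral_const_mul] at this
  have p1 := part1 Z₁ Z₂ hpos₂ hI1 hI2 hId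
  refine ⟨p1, ?_⟩
  intro r hr x hx
  have hd'' : Integrable (fun ω => ⨆ i, |Z₂ ω i - Z₁ ω i|) μ := by
    simpa only [abs_sub_comm] using hId
  have p1' := part1 Z₂ Z₁ hpos₁ hI2 hI1 hd'' x
  have hc : (fun ω => ⨆ i, |Z₂ ω i - Z₁ ω i|) = fun ω => ⨆ i, |Z₁ ω i - Z₂ ω i| := by
    funext ω; simp only [abs_sub_comm]
  rw [hc] at p1'
  set A := ∫ ω, ⨆ i, |x i| * Z₁ ω i ∂μ
  set B := ∫ ω, ⨆ i, |x i| * Z₂ ω i ∂μ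
  set M := ⨆ i, |x i| with hM
  set I := ∫ ω, ⨆ i, |Z₁ ω i - Z₂ ω i| ∂μ with hI
  have hM0 : 0 ≤ M := le_trans (abs_nonneg (x ⟨0, hd⟩)) (le_ciSup (bdd fun j => |x j|) ⟨0, hd⟩)
  have hI0 : 0 ≤ I := integral_nonneg fun ω =>
    le_trans (abs_nonneg (Z₁ ω ⟨0, hd⟩ - Z₂ ω ⟨0, hd⟩)) (le_ciSup (bdd fun j => |Z₁ ω j - Z₂ ω j|) ⟨0, hd⟩)
  have hIS : I ≤ ∫ ω, ∑ i, |Z₁ ω i - Z₂ ω i| ∂μ := by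
    refine integral_mono hId hIsum fun ω => ?_
    exact ciSup_le fun i => Finset.single_le_sum (f := fun j => |Z₁ ω j - Z₂ ω j|)
      (fun j _ => abs_nonneg _) (Finset.mem_univ i)
  have habs : |A - B| ≤ M * I := abs_sub_le_iff.mpr ⟨by linarith [p1 x], by linarith [p1']⟩
  refine habs.trans ?_
  exact mul_le_mul hx hIS hI0 hr
end

section
/- For d = 2 and α > 0, the Dirichlet D-norm generator constant satisfies m(α) := ||(1,1)||_{D(α)} = 1 + Γ(α + 1/2)/(√π · Γ(α+1)) = 1 + 1/(α·B(α, 1/2)), where B denotes the beta function. -/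
open MeasureTheory ProbabilityTheory

open Real Set


lemma betaReal {a b : ℝ} (ha : 0 < a) (hb : 0 < b) :
    ∫ u in (0:ℝ)..1, u ^ (a-1) * (1-u) ^ (b-1) =
      Real.Gamma a * Real.Gamma b / Real.Gamma (a+b) := by
  have h := Complex.Gamma_mul_Gamma_eq_betaIntegral
    (s := (a:ℂ)) (t := (b:ℂ)) (by simpa using ha) (by simpa using hb)
  have hbeta : Complex.betaIntegral (a:ℂ) (b:ℂ)
      = ((∫ u in (0:ℝ)..1, u ^ (a-1) * (1-u) ^ (b-1) : ℝ) : ℂ) := by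
    rw [Complex.betaIntegral, ← intervalIntegral.integral_ofReal]
    refine intervalIntegral.integral_congr fun x hx => ?_
    rw [uIcc_of_le zero_le_one] at hx
    have e1 : ((a:ℂ) - 1) = ((a - 1 : ℝ) : ℂ) := by push_cast; ring
    have e2 : ((b:ℂ) - 1) = ((b - 1 : ℝ) : ℂ) := by push_cast; ring
    have e3 : (1 - (x:ℂ)) = ((1 - x : ℝ) : ℂ) := by push_cast; ring
    rw [e1, e2, e3, ← Complex.ofReal_cpow hx.1,
      ← Complex.ofReal_cpow (by linarith [hx.2] : (0:ℝ) ≤ 1 - x)]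
    push_cast
    ring
  rw [hbeta, ← Complex.ofReal_add, Complex.Gamma_ofReal, Complex.Gamma_ofReal,
    Complex.Gamma_ofReal] at h
  have hr : Gamma a * Gamma b
      = Gamma (a+b) * ∫ u in (0:ℝ)..1, u ^ (a-1) * (1-u) ^ (b-1) := by exact_mod_cast h
  rw [hr]
  field_simp [(Real.Gamma_pos_of_pos (by linarith : (0:ℝ) < a+b)).ne']

lemma Jint {α : ℝ} (hα : 0 < α) :
    ∫ u in (0:ℝ)..1, u ^ (α-1) * ((1-u) * (1+u) ^ (-(2*α+1))) = (2:ℝ) ^ (-(2*α)) / α := by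
  have hbase : IntervalIntegrable (fun u:ℝ => u ^ (α-1)) volume 0 1 :=
    intervalIntegral.intervalIntegrable_rpow' (by linarith)
  have hint : IntervalIntegrable
      (fun u:ℝ => u ^ (α-1) * ((1-u) * (1+u) ^ (-(2*α+1)))) volume 0 1 := by
    rw [intervalIntegrable_iff_integrableOn_Ioc_of_le zero_le_one] at hbase ⊢
    refine hbase.mono' ?_ ?_
    · apply Measurable.aestronglyMeasurable
      fun_prop
    · rw [ae_restrict_iff' measurableSet_Ioc]
      filter_upwards with u hu
      have h1 : (0:ℝ) < u := hu.1
      have h2 : u ≤ 1 := hu.2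
      have hp1 : (0:ℝ) ≤ (1+u) ^ (-(2*α+1)) := rpow_nonneg (by linarith) _
      have hp2 : (1+u:ℝ) ^ (-(2*α+1)) ≤ 1 :=
        rpow_le_one_of_one_le_of_nonpos (by linarith) (by linarith)
      have hq : (0:ℝ) ≤ u ^ (α-1) := rpow_nonneg h1.le _
      rw [Real.norm_of_nonneg (mul_nonneg hq (mul_nonneg (by linarith) hp1))]
      calc u ^ (α-1) * ((1-u) * (1+u) ^ (-(2*α+1)))
          ≤ u ^ (α-1) * (1 * 1) := by
            apply mul_le_mul_of_nonneg_left (by nlinarith) hq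
        _ = u ^ (α-1) := by ring
  have key := intervalIntegral.integral_eq_sub_of_hasDerivAt_of_le zero_le_one
    (f := fun u => u ^ α * (1+u) ^ (-(2*α)) / α)
    (f' := fun u => u ^ (α-1) * ((1-u) * (1+u) ^ (-(2*α+1))))
    ?_ ?_ hint
  · rw [key]
    norm_num [Real.zero_rpow hα.ne']
  · -- continuity
    apply ContinuousOn.div_const
    apply ContinuousOn.mul
    · exact (continuousOn_id.rpow_const fun x _ => Or.inr hα.le)
    · refine (continuousOn_const.add continuousOn_id).rpow_const fun x hx => Or.inl ?_
      have := hx.1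
      change (1:ℝ) + x ≠ 0
      intro h
      linarith
  · intro u hu
    have hu0 : (0:ℝ) < u := hu.1
    have hu1 : u < 1 := hu.2
    have h1u : (0:ℝ) < 1 + u := by linarith
    have d1 : HasDerivAt (fun u:ℝ => u ^ α) (α * u ^ (α-1)) u :=
      Real.hasDerivAt_rpow_const (Or.inl hu0.ne')
    have d2 : HasDerivAt (fun u:ℝ => (1+u) ^ (-(2*α)))
        ((-(2*α)) * (1+u) ^ (-(2*α)-1)) u := by
      have := ((hasDerivAt_id u).const_add 1).rpow_const (p := -(2*α)) (Or.inl h1u.ne')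
      simpa using this
    have := (d1.mul d2).div_const α
    refine this.congr_deriv ?_
    have e1 : (1+u:ℝ) ^ (-(2*α)) = (1+u) ^ (-(2*α+1)) * (1+u) := by
      rw [← Real.rpow_add_one h1u.ne' (-(2*α+1))]
      norm_num
    have e2 : u ^ α = u ^ (α-1) * u := by
      rw [← Real.rpow_add_one hu0.ne' (α-1)]
      norm_num
    rw [e1, e2, show (-(2*α)-1:ℝ) = -(2*α+1) from by ring]
    field_simp
    ring

lemma exp_rpow_integrable {a r : ℝ} (ha : 0 < a) (hr : 1 ≤ r) :
    IntegrableOn (fun y:ℝ => y ^ (a-1) * Real.exp (-(r*y))) (Ioi 0) := by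
  refine (Real.GammaIntegral_convergent ha).mono' ?_ ?_
  · apply Measurable.aestronglyMeasurable; fun_prop
  · rw [ae_restrict_iff' measurableSet_Ioi]
    filter_upwards with y hy
    have hy0 : (0:ℝ) < y := hy
    rw [Real.norm_of_nonneg (mul_nonneg (rpow_nonneg hy0.le _) (exp_pos _).le)]
    rw [mul_comm (Real.exp (-y))]
    apply mul_le_mul_of_nonneg_left _ (rpow_nonneg hy0.le _)
    apply Real.exp_le_exp.2
    nlinarith

lemma gpdf_mul_ofReal (α : ℝ) (hα : 0 < α) (x : ℝ) :
    gammaPDF α 1 x * ENNReal.ofReal x =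
      ENNReal.ofReal ((Ioi (0:ℝ)).indicator
        (fun x => x ^ ((α+1)-1) * Real.exp (-(1*x)) / Real.Gamma α) x) := by
  rcases lt_trichotomy x 0 with h | h | h
  · rw [gammaPDF_of_neg h, zero_mul, Set.indicator_of_notMem (by simp [h.not_ge]; linarith)]
    simp
  · subst h
    simp
  · rw [Set.indicator_of_mem (mem_Ioi.mpr h), gammaPDF_of_nonneg h.le,
      ← ENNReal.ofReal_mul (by positivity)]
    congr 1
    rw [one_rpow]
    rw [show ((α+1)-1 : ℝ) = (α-1)+1 from by ring, Real.rpow_add_one h.ne']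
    ring

lemma mean_lintegral {α : ℝ} (hα : 0 < α) :
    ∫⁻ x, gammaPDF α 1 x * ENNReal.ofReal x = ENNReal.ofReal α := by
  simp_rw [gpdf_mul_ofReal α hα]
  have heq : (fun x => ENNReal.ofReal ((Ioi (0:ℝ)).indicator
        (fun x => x ^ ((α+1)-1) * Real.exp (-(1*x)) / Real.Gamma α) x))
      = (Ioi (0:ℝ)).indicator
        (fun x => ENNReal.ofReal (x ^ ((α+1)-1) * Real.exp (-(1*x)) / Real.Gamma α)) := by
    funext x
    by_cases h : x ∈ Ioi (0:ℝ) <;> simp [h]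
  rw [heq]
  rw [show lintegral volume ((Ioi (0:ℝ)).indicator
        (fun x => ENNReal.ofReal (x ^ ((α+1)-1) * Real.exp (-(1*x)) / Real.Gamma α)))
      = ∫⁻ x in Ioi (0:ℝ), ENNReal.ofReal (x ^ ((α+1)-1) * Real.exp (-(1*x)) / Real.Gamma α)
    from by exact lintegral_indicator measurableSet_Ioi _]
  rw [← ofReal_integral_eq_lintegral_ofReal]
  · rw [integral_div, integral_rpow_mul_exp_neg_mul_Ioi (by linarith) one_pos,
      Real.Gamma_add_one hα.ne']
    norm_num
    rw [mul_div_assoc, div_self (Real.Gamma_pos_of_pos hα).ne', mul_one]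
  · exact (exp_rpow_integrable (by linarith) le_rfl).div_const _
  · filter_upwards [self_mem_ae_restrict measurableSet_Ioi] with y hy
    have : (0:ℝ) < y := hy
    have : (0:ℝ) ≤ y ^ ((α+1)-1) * Real.exp (-(1*y)) / Real.Gamma α := by positivity
    exact this

lemma inner_eval {α : ℝ} (hα : 0 < α) {y : ℝ} (hy : 0 ≤ y) :
    ∫⁻ x, gammaPDF α 1 x * ENNReal.ofReal (y - x) =
      ENNReal.ofReal (y ^ (α+1) *
        (∫ u in (0:ℝ)..1, u ^ (α-1) * ((1-u) * Real.exp (-(y*u)))) / Real.Gamma α) := by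
  set f : ℝ → ℝ := fun x => x ^ (α-1) * Real.exp (-x) * (y - x) / Real.Gamma α with hf
  have hpt : ∀ x, gammaPDF α 1 x * ENNReal.ofReal (y - x)
      = ENNReal.ofReal ((Icc 0 y).indicator f x) := by
    intro x
    rcases lt_trichotomy x 0 with h | h | h
    · rw [gammaPDF_of_neg h, zero_mul,
        Set.indicator_of_notMem (fun hm => absurd hm.1 h.not_ge), ENNReal.ofReal_zero]
    · subst h
      rw [gammaPDF_of_nonneg le_rfl, Set.indicator_of_mem (mem_Icc.mpr ⟨le_rfl, hy⟩),
        ← ENNReal.ofReal_mul (by positivity)]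
      congr 1
      simp [hf]
      ring
    · by_cases hxy : x ≤ y
      · rw [gammaPDF_of_nonneg h.le, Set.indicator_of_mem (mem_Icc.mpr ⟨h.le, hxy⟩),
          ← ENNReal.ofReal_mul (by positivity)]
        congr 1
        simp only [hf, one_rpow, one_mul]
        ring
      · rw [Set.indicator_of_notMem (fun hm => hxy hm.2), ENNReal.ofReal_zero,
          show ENNReal.ofReal (y - x) = 0 from by
            rw [ENNReal.ofReal_eq_zero]; linarith, mul_zero]
  simp_rw [hpt]
  have heq : (fun x => ENNReal.ofReal ((Icc 0 y).indicator f x))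
      = (Icc (0:ℝ) y).indicator (fun x => ENNReal.ofReal (f x)) := by
    funext x
    by_cases h : x ∈ Icc (0:ℝ) y <;> simp [h]
  rw [heq]
  rw [show lintegral volume ((Icc (0:ℝ) y).indicator (fun x => ENNReal.ofReal (f x)))
      = ∫⁻ x in Icc (0:ℝ) y, ENNReal.ofReal (f x)
    from by exact lintegral_indicator measurableSet_Icc _]
  have hint : IntegrableOn f (Icc 0 y) := by
    rw [integrableOn_Icc_iff_integrableOn_Ioc]
    have hbase : IntegrableOn (fun x:ℝ => x ^ (α-1)) (Ioc 0 y) :=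
      (intervalIntegral.intervalIntegrable_rpow' (by linarith)).1
    refine (hbase.mul_const (y / Real.Gamma α)).mono' ?_ ?_
    · apply Measurable.aestronglyMeasurable; fun_prop
    · filter_upwards [self_mem_ae_restrict measurableSet_Ioc] with x hx
      have h0 : (0:ℝ) < x := hx.1
      have h1 : x ≤ y := hx.2
      have hG : (0:ℝ) < Real.Gamma α := Real.Gamma_pos_of_pos hα
      have hyx : (0:ℝ) ≤ y - x := by linarith
      have hnn : (0:ℝ) ≤ f x := by
        simp only [hf]
        exact div_nonneg (mul_nonneg (mul_nonneg (rpow_nonneg h0.le _)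
          (Real.exp_pos _).le) hyx) hG.le
      rw [Real.norm_of_nonneg hnn]
      simp only [hf]
      have key : Real.exp (-x) * (y - x) ≤ y := by
        nlinarith [Real.exp_le_one_iff.mpr (by linarith : -x ≤ 0), Real.exp_pos (-x)]
      calc x ^ (α-1) * Real.exp (-x) * (y - x) / Real.Gamma α
          ≤ x ^ (α-1) * y / Real.Gamma α := by
            rw [div_le_div_iff_of_pos_right hG, mul_assoc]
            exact mul_le_mul_of_nonneg_left key (rpow_nonneg h0.le _)
        _ = x ^ (α-1) * (y / Real.Gamma α) := by ring
    -- bound done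
  rw [← ofReal_integral_eq_lintegral_ofReal hint]
  · congr 1
    rw [integral_Icc_eq_integral_Ioc, ← intervalIntegral.integral_of_le hy]
    rcases eq_or_lt_of_le hy with h0 | h0
    · rw [← h0]
      simp [Real.zero_rpow (by linarith : α + 1 ≠ 0)]
    · have hsub := intervalIntegral.smul_integral_comp_mul_left (f := f) (a := 0) (b := 1) y
      rw [mul_zero, mul_one] at hsub
      rw [← hsub]
      have hcg : ∫ u in (0:ℝ)..1, f (y * u)
          = ∫ u in (0:ℝ)..1, (y ^ (α-1) * y / Real.Gamma α) *
              (u ^ (α-1) * ((1-u) * Real.exp (-(y*u)))) := by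
        refine intervalIntegral.integral_congr fun u hu => ?_
        rw [uIcc_of_le zero_le_one] at hu
        simp only [hf]
        rw [Real.mul_rpow hy hu.1]
        ring
      rw [hcg, intervalIntegral.integral_const_mul, smul_eq_mul]
      have e2 : y ^ (2:ℝ) = y * y := by
        rw [show (2:ℝ) = ((2:ℕ):ℝ) from by norm_num, Real.rpow_natCast]
        ring
      rw [show y ^ (α+1) = y ^ (α-1) * y * y from by
        rw [show (α+1:ℝ) = (α-1)+2 from by ring, Real.rpow_add h0, e2]; ring]
      ring
  · filter_upwards [self_mem_ae_restrict measurableSet_Icc] with x hx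
    have h0 : (0:ℝ) ≤ x := hx.1
    have h1 : x ≤ y := hx.2
    simp only [hf]
    have : (0:ℝ) ≤ y - x := by linarith
    positivity




lemma T_eval {α : ℝ} (hα : 0 < α) :
    ∫⁻ y, gammaPDF α 1 y * ∫⁻ x, gammaPDF α 1 x * ENNReal.ofReal (y - x) =
      ENNReal.ofReal (Real.Gamma (2*α+1) * (2:ℝ) ^ (-(2*α)) / (α * Real.Gamma α ^ 2)) := by
  have hG : (0:ℝ) < Real.Gamma α := Real.Gamma_pos_of_pos hα
  set K : ℝ → ℝ := fun y => ∫ u in (0:ℝ)..1, u ^ (α-1) * ((1-u) * Real.exp (-(y*u))) with hK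
  have hKnn : ∀ y, 0 ≤ y → 0 ≤ K y := by
    intro y hy
    refine intervalIntegral.integral_nonneg zero_le_one fun u hu => ?_
    have h1 : (0:ℝ) ≤ u := hu.1
    have h2 : u ≤ 1 := hu.2
    have : (0:ℝ) ≤ 1 - u := by linarith
    positivity
  -- Step A: pointwise identification
  have hpt : (fun y => gammaPDF α 1 y * ∫⁻ x, gammaPDF α 1 x * ENNReal.ofReal (y - x))
      = (Ioi (0:ℝ)).indicator
        (fun y => ENNReal.ofReal (y ^ (2*α) * Real.exp (-y) / Real.Gamma α ^ 2 * K y)) := by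
    funext y
    rcases lt_trichotomy y 0 with h | h | h
    · rw [gammaPDF_of_neg h, zero_mul,
        Set.indicator_of_notMem (by simp [h.not_gt] : y ∉ Ioi (0:ℝ))]
    · subst h
      rw [Set.indicator_of_notMem (by simp : (0:ℝ) ∉ Ioi (0:ℝ)), inner_eval hα le_rfl,
        Real.zero_rpow (by linarith : α + 1 ≠ 0)]
      simp
    · rw [Set.indicator_of_mem (mem_Ioi.mpr h), gammaPDF_of_nonneg h.le,
        inner_eval hα h.le, ← ENNReal.ofReal_mul (by positivity)]
      congr 1
      rw [one_rpow, one_mul]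
      rw [show y ^ (2*α) = y ^ (α-1) * y ^ (α+1) from by
        rw [← Real.rpow_add h, show (α-1+(α+1):ℝ) = 2*α from by ring]]
      simp only [hK]
      generalize (∫ u in (0:ℝ)..1, u ^ (α-1) * ((1-u) * Real.exp (-(y*u)))) = I
      field_simp
  rw [hpt]
  rw [show lintegral volume ((Ioi (0:ℝ)).indicator
        (fun y => ENNReal.ofReal (y ^ (2*α) * Real.exp (-y) / Real.Gamma α ^ 2 * K y)))
      = ∫⁻ y in Ioi (0:ℝ), ENNReal.ofReal (y ^ (2*α) * Real.exp (-y) / Real.Gamma α ^ 2 * K y)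
    from by exact lintegral_indicator measurableSet_Ioi _]
  -- Step C: expand K inside
  have hbase : IntegrableOn (fun u:ℝ => u ^ (α-1)) (Ioc 0 1) :=
    (intervalIntegral.intervalIntegrable_rpow' (by linarith)).1
  have hC : ∀ y ∈ Ioi (0:ℝ),
      ENNReal.ofReal (y ^ (2*α) * Real.exp (-y) / Real.Gamma α ^ 2 * K y)
      = ∫⁻ u in Ioc (0:ℝ) 1, ENNReal.ofReal ((y ^ (2*α) * Real.exp (-y) / Real.Gamma α ^ 2)
          * (u ^ (α-1) * ((1-u) * Real.exp (-(y*u))))) := by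
    intro y hy
    have hy0 : (0:ℝ) < y := hy
    have hIK : IntegrableOn (fun u:ℝ => u ^ (α-1) * ((1-u) * Real.exp (-(y*u)))) (Ioc 0 1) := by
      refine hbase.mono' (by apply Measurable.aestronglyMeasurable; fun_prop) ?_
      filter_upwards [self_mem_ae_restrict measurableSet_Ioc] with u hu
      have h1 : (0:ℝ) < u := hu.1
      have h2 : u ≤ 1 := hu.2
      have h3 : (0:ℝ) ≤ 1 - u := by linarith
      rw [Real.norm_of_nonneg (by positivity)]
      have h4 : Real.exp (-(y*u)) ≤ 1 := Real.exp_le_one_iff.mpr (by nlinarith)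
      calc u ^ (α-1) * ((1-u) * Real.exp (-(y*u))) ≤ u ^ (α-1) * (1 * 1) := by
            apply mul_le_mul_of_nonneg_left _ (rpow_nonneg h1.le _)
            exact mul_le_mul (by linarith) h4 (Real.exp_pos _).le zero_le_one
        _ = u ^ (α-1) := by ring
    have hKof : ENNReal.ofReal (K y)
        = ∫⁻ u in Ioc (0:ℝ) 1, ENNReal.ofReal (u ^ (α-1) * ((1-u) * Real.exp (-(y*u)))) := by
      simp only [hK]
      rw [intervalIntegral.integral_of_le zero_le_one]
      refine ofReal_integral_eq_lintegral_ofReal hIK ?_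
      filter_upwards [self_mem_ae_restrict measurableSet_Ioc] with u hu
      have h1 : (0:ℝ) < u := hu.1
      have h2 : u ≤ 1 := hu.2
      have h3 : (0:ℝ) ≤ 1 - u := by linarith
      positivity
    rw [ENNReal.ofReal_mul (by positivity), hKof, ← lintegral_const_mul' _ _ ENNReal.ofReal_ne_top]
    refine lintegral_congr fun u => ?_
    rw [← ENNReal.ofReal_mul (by positivity)]
  rw [setLIntegral_congr_fun measurableSet_Ioi hC]
  -- Step D: swap
  rw [lintegral_lintegral_swap (by apply Measurable.aemeasurable; fun_prop)]
  -- Step E: inner integral in y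
  have hE : ∀ u ∈ Ioc (0:ℝ) 1,
      (∫⁻ y in Ioi (0:ℝ), ENNReal.ofReal ((y ^ (2*α) * Real.exp (-y) / Real.Gamma α ^ 2)
          * (u ^ (α-1) * ((1-u) * Real.exp (-(y*u))))))
      = ENNReal.ofReal ((Real.Gamma (2*α+1) / Real.Gamma α ^ 2)
          * (u ^ (α-1) * ((1-u) * (1/(1+u)) ^ (2*α+1)))) := by
    intro u hu
    have h1 : (0:ℝ) < u := hu.1
    have h2 : u ≤ 1 := hu.2
    have h3 : (0:ℝ) ≤ 1 - u := by linarith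
    have hru : (1:ℝ) ≤ 1 + u := by linarith
    have hcong : ∀ y ∈ Ioi (0:ℝ),
        ENNReal.ofReal ((y ^ (2*α) * Real.exp (-y) / Real.Gamma α ^ 2)
          * (u ^ (α-1) * ((1-u) * Real.exp (-(y*u)))))
        = ENNReal.ofReal ((u ^ (α-1) * (1-u) / Real.Gamma α ^ 2)
          * (y ^ ((2*α+1)-1) * Real.exp (-((1+u)*y)))) := by
      intro y hy
      congr 1
      rw [show ((2*α+1)-1 : ℝ) = 2*α from by ring,
        show -((1+u)*y) = -y + -(y*u) from by ring, Real.exp_add]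
      ring
    rw [setLIntegral_congr_fun measurableSet_Ioi hcong]
    have hCnn : (0:ℝ) ≤ u ^ (α-1) * (1-u) / Real.Gamma α ^ 2 :=
      div_nonneg (mul_nonneg (rpow_nonneg h1.le _) h3) (by positivity)
    have this1 : ∫⁻ y in Ioi (0:ℝ),
        ENNReal.ofReal (y ^ ((2*α+1)-1) * Real.exp (-((1+u)*y)))
        = ENNReal.ofReal ((1/(1+u)) ^ (2*α+1) * Real.Gamma (2*α+1)) := by
      rw [← ofReal_integral_eq_lintegral_ofReal
        (exp_rpow_integrable (by linarith) hru) ?_]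
      · rw [integral_rpow_mul_exp_neg_mul_Ioi (by linarith) (by linarith)]
      · filter_upwards [self_mem_ae_restrict measurableSet_Ioi] with y hy
        have : (0:ℝ) < y := hy
        positivity
    calc ∫⁻ y in Ioi (0:ℝ), ENNReal.ofReal ((u ^ (α-1) * (1-u) / Real.Gamma α ^ 2)
          * (y ^ ((2*α+1)-1) * Real.exp (-((1+u)*y))))
        = ∫⁻ y in Ioi (0:ℝ), ENNReal.ofReal (u ^ (α-1) * (1-u) / Real.Gamma α ^ 2)
            * ENNReal.ofReal (y ^ ((2*α+1)-1) * Real.exp (-((1+u)*y))) := by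
          refine lintegral_congr fun y => ?_
          rw [← ENNReal.ofReal_mul hCnn]
      _ = ENNReal.ofReal (u ^ (α-1) * (1-u) / Real.Gamma α ^ 2)
            * ∫⁻ y in Ioi (0:ℝ), ENNReal.ofReal (y ^ ((2*α+1)-1) * Real.exp (-((1+u)*y))) :=
          lintegral_const_mul' _ _ ENNReal.ofReal_ne_top
      _ = _ := by
          rw [this1, ← ENNReal.ofReal_mul hCnn]
          congr 1
          ring
  rw [setLIntegral_congr_fun measurableSet_Ioc hE]
  -- Step F: final real integral
  have hIF : IntegrableOn (fun u:ℝ => (Real.Gamma (2*α+1) / Real.Gamma α ^ 2)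
      * (u ^ (α-1) * ((1-u) * (1/(1+u)) ^ (2*α+1)))) (Ioc 0 1) := by
    refine (hbase.const_mul (Real.Gamma (2*α+1) / Real.Gamma α ^ 2)).mono'
      (by apply Measurable.aestronglyMeasurable; fun_prop) ?_
    filter_upwards [self_mem_ae_restrict measurableSet_Ioc] with u hu
    have h1 : (0:ℝ) < u := hu.1
    have h2 : u ≤ 1 := hu.2
    have h3 : (0:ℝ) ≤ 1 - u := by linarith
    have hp : (0:ℝ) ≤ (1/(1+u)) ^ (2*α+1) := rpow_nonneg (by positivity) _
    have hple : (1/(1+u):ℝ) ^ (2*α+1) ≤ 1 := by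
      apply Real.rpow_le_one (by positivity) _ (by linarith)
      rw [div_le_one (by linarith)]
      linarith
    rw [Real.norm_of_nonneg (by positivity)]
    calc (Real.Gamma (2*α+1) / Real.Gamma α ^ 2) * (u ^ (α-1) * ((1-u) * (1/(1+u)) ^ (2*α+1)))
        ≤ (Real.Gamma (2*α+1) / Real.Gamma α ^ 2) * (u ^ (α-1) * (1 * 1)) := by
          apply mul_le_mul_of_nonneg_left _ (by positivity)
          apply mul_le_mul_of_nonneg_left _ (rpow_nonneg h1.le _)
          exact mul_le_mul (by linarith) hple hp zero_le_one
      _ = (Real.Gamma (2*α+1) / Real.Gamma α ^ 2) * u ^ (α-1) := by ring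
  rw [← ofReal_integral_eq_lintegral_ofReal hIF ?_]
  · congr 1
    rw [← intervalIntegral.integral_of_le zero_le_one, intervalIntegral.integral_const_mul]
    have hcg : ∫ u in (0:ℝ)..1, u ^ (α-1) * ((1-u) * (1/(1+u)) ^ (2*α+1))
        = ∫ u in (0:ℝ)..1, u ^ (α-1) * ((1-u) * (1+u) ^ (-(2*α+1))) := by
      refine intervalIntegral.integral_congr fun u hu => ?_
      rw [uIcc_of_le zero_le_one] at hu
      have : (0:ℝ) < 1 + u := by linarith [hu.1]
      rw [one_div, Real.inv_rpow this.le, ← Real.rpow_neg this.le]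
    rw [hcg, Jint hα]
    field_simp
  · filter_upwards [self_mem_ae_restrict measurableSet_Ioc] with u hu
    have h1 : (0:ℝ) < u := hu.1
    have h2 : u ≤ 1 := hu.2
    have h3 : (0:ℝ) ≤ 1 - u := by linarith
    have : (0:ℝ) < 1 + u := by linarith
    positivity


lemma final_arith {α : ℝ} (hα : 0 < α) :
    (1/α) * (α + Real.Gamma (2*α+1) * (2:ℝ)^(-(2*α)) / (α * Real.Gamma α ^ 2))
      = 1 + Real.Gamma (α+1/2) / (Real.sqrt Real.pi * Real.Gamma (α+1)) := by
  have hG : (0:ℝ) < Real.Gamma α := Real.Gamma_pos_of_pos hα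
  have hGh : (0:ℝ) < Real.Gamma (α+1/2) := Real.Gamma_pos_of_pos (by linarith)
  have hsπ : (0:ℝ) < Real.sqrt Real.pi := Real.sqrt_pos.mpr Real.pi_pos
  have hp : (0:ℝ) < (2:ℝ)^(-(2*α)) := rpow_pos_of_pos two_pos _
  have h2a1 : Real.Gamma (2*α+1) = 2*α * Real.Gamma (2*α) :=
    Real.Gamma_add_one (by positivity)
  have ha1 : Real.Gamma (α+1) = α * Real.Gamma α := Real.Gamma_add_one hα.ne'
  have h2 : (2:ℝ)^(1-2*α) = 2 * (2:ℝ)^(-(2*α)) := by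
    rw [show (1-2*α:ℝ) = 1 + -(2*α) from by ring, Real.rpow_add two_pos, Real.rpow_one]
  have hdup := Real.Gamma_mul_Gamma_add_half α
  rw [h2] at hdup
  have hΓ2α : Real.Gamma (2*α) = Real.Gamma α * Real.Gamma (α+1/2)
      / (2 * (2:ℝ)^(-(2*α)) * Real.sqrt Real.pi) := by
    field_simp at hdup ⊢
    linarith [hdup]
  rw [h2a1, ha1, hΓ2α]
  field_simp

lemma second_arith {α : ℝ} (hα : 0 < α) :
    Real.Gamma (α+1/2) / (Real.sqrt Real.pi * Real.Gamma (α+1))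
      = 1 / (α * ∫ u in (0:ℝ)..1, u ^ (α-1) * (1-u) ^ ((1:ℝ)/2-1)) := by
  have hG : (0:ℝ) < Real.Gamma α := Real.Gamma_pos_of_pos hα
  have hGh : (0:ℝ) < Real.Gamma (α+1/2) := Real.Gamma_pos_of_pos (by linarith)
  have hsπ : (0:ℝ) < Real.sqrt Real.pi := Real.sqrt_pos.mpr Real.pi_pos
  have hB := betaReal hα (by norm_num : (0:ℝ) < 1/2)
  rw [hB, Real.Gamma_one_half_eq, Real.Gamma_add_one hα.ne']
  rw [div_eq_div_iff (by positivity) ?_]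
  · field_simp
  · positivity
/-- The bivariate Dirichlet D-norm generator constant:
`m(α) = 1 + Γ(α + 1/2)/(√π Γ(α+1)) = 1 + 1/(α B(α, 1/2))`. -/
theorem bivariate_dirichlet_generator_constant (α : ℝ) (hα : 0 < α)
    {Ω : Type*} [MeasurableSpace Ω] (μ : Measure Ω) [IsProbabilityMeasure μ]
    (V₁ V₂ : Ω → ℝ) (hmeas₁ : Measurable V₁) (hmeas₂ : Measurable V₂)
    (hindep : IndepFun V₁ V₂ μ)
    (hgamma₁ : μ.map V₁ = gammaMeasure α 1)
    (hgamma₂ : μ.map V₂ = gammaMeasure α 1) :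
    (1 / α) * ∫ ω, max (V₁ ω) (V₂ ω) ∂μ =
        1 + Real.Gamma (α + 1 / 2) / (Real.sqrt Real.pi * Real.Gamma (α + 1)) ∧
      (1 / α) * ∫ ω, max (V₁ ω) (V₂ ω) ∂μ =
        1 + 1 / (α * ∫ u in (0:ℝ)..1, u ^ (α - 1) * (1 - u) ^ ((1:ℝ) / 2 - 1)) := by
  set ν := gammaMeasure α 1 with hν
  have hprob : IsProbabilityMeasure ν := isProbabilityMeasure_gammaMeasure hα one_pos
  have hD : (0:ℝ) ≤ Real.Gamma (2*α+1) * (2:ℝ) ^ (-(2*α)) / (α * Real.Gamma α ^ 2) := by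
    have := Real.Gamma_pos_of_pos (show (0:ℝ) < 2*α+1 by linarith)
    have := Real.Gamma_pos_of_pos hα
    positivity
  -- joint law
  have hmap : μ.map (fun ω => (V₁ ω, V₂ ω)) = ν.prod ν :=
    ((indepFun_iff_map_prod_eq_prod_map_map hmeas₁.aemeasurable
      hmeas₂.aemeasurable).mp hindep).trans (by rw [hgamma₁, hgamma₂])
  have hmmax : Measurable (fun z : ℝ × ℝ => max z.1 z.2) :=
    measurable_fst.max measurable_snd
  have hint : ∫ ω, max (V₁ ω) (V₂ ω) ∂μ = ∫ z : ℝ × ℝ, max z.1 z.2 ∂(ν.prod ν) := by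
    rw [← hmap, integral_map (hmeas₁.prodMk hmeas₂).aemeasurable
      hmmax.aestronglyMeasurable]
  -- a.e. nonnegativity of the first coordinate
  have hν0 : ν (Iio 0) = 0 := by
    rw [hν, gammaMeasure, withDensity_apply _ measurableSet_Iio]
    exact lintegral_gammaPDF_of_nonpos le_rfl
  have hae1 : ∀ᵐ z : ℝ × ℝ ∂(ν.prod ν), 0 ≤ z.1 := by
    rw [ae_iff]
    have hset : {z : ℝ × ℝ | ¬ 0 ≤ z.1} = Iio 0 ×ˢ (univ : Set ℝ) := by
      ext z; simp [not_le]
    rw [hset, Measure.prod_prod, hν0, zero_mul]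
  -- pass to lintegral
  have hnn : ∀ᵐ z : ℝ × ℝ ∂(ν.prod ν), 0 ≤ max z.1 z.2 := by
    filter_upwards [hae1] with z hz
    exact le_trans hz (le_max_left _ _)
  rw [hint, integral_eq_lintegral_of_nonneg_ae hnn hmmax.aestronglyMeasurable]
  -- compute the lintegral
  have hsplit : ∫⁻ z : ℝ × ℝ, ENNReal.ofReal (max z.1 z.2) ∂(ν.prod ν)
      = (∫⁻ z : ℝ × ℝ, ENNReal.ofReal z.1 ∂(ν.prod ν))
        + ∫⁻ z : ℝ × ℝ, ENNReal.ofReal (z.2 - z.1) ∂(ν.prod ν) := by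
    rw [← lintegral_add_left (measurable_fst.ennreal_ofReal)]
    refine lintegral_congr_ae ?_
    filter_upwards [hae1] with z hz
    rcases le_total z.2 z.1 with h | h
    · rw [max_eq_left h,
        show ENNReal.ofReal (z.2 - z.1) = 0 from ENNReal.ofReal_of_nonpos (by linarith),
        add_zero]
    · rw [max_eq_right h, ← ENNReal.ofReal_add hz (by linarith)]
      congr 1
      ring
  have hpm : Measurable (gammaPDF α 1) := (measurable_gammaPDFReal α 1).ennreal_ofReal
  have hM : ∫⁻ z : ℝ × ℝ, ENNReal.ofReal z.1 ∂(ν.prod ν) = ENNReal.ofReal α := by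
    rw [lintegral_prod _ (measurable_fst.ennreal_ofReal).aemeasurable]
    simp only [lintegral_const, measure_univ, mul_one]
    rw [hν, gammaMeasure, lintegral_withDensity_eq_lintegral_mul _ hpm
      (g := fun x => ENNReal.ofReal x) measurable_id.ennreal_ofReal]
    simpa using mean_lintegral hα
  have hT : ∫⁻ z : ℝ × ℝ, ENNReal.ofReal (z.2 - z.1) ∂(ν.prod ν)
      = ENNReal.ofReal (Real.Gamma (2*α+1) * (2:ℝ) ^ (-(2*α)) / (α * Real.Gamma α ^ 2)) := by
    rw [lintegral_prod_symm (fun z : ℝ × ℝ => ENNReal.ofReal (z.2 - z.1)) ((measurable_snd.sub measurable_fst).ennreal_ofReal).aemeasurable]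
    have hinner : ∀ y : ℝ, ∫⁻ x, ENNReal.ofReal (y - x) ∂ν
        = ∫⁻ x, gammaPDF α 1 x * ENNReal.ofReal (y - x) := by
      intro y
      rw [hν, gammaMeasure, lintegral_withDensity_eq_lintegral_mul _ hpm
        (g := fun x => ENNReal.ofReal (y - x)) (by fun_prop)]
      rfl
    calc ∫⁻ y, ∫⁻ x, ENNReal.ofReal (y - x) ∂ν ∂ν
        = ∫⁻ y, (∫⁻ x, gammaPDF α 1 x * ENNReal.ofReal (y - x)) ∂ν := by
          exact lintegral_congr fun y => hinner y
      _ = ∫⁻ y, gammaPDF α 1 y * ∫⁻ x, gammaPDF α 1 x * ENNReal.ofReal (y - x) := by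
          rw [hν, gammaMeasure, lintegral_withDensity_eq_lintegral_mul _ hpm
            (g := fun y => ∫⁻ x, gammaPDF α 1 x * ENNReal.ofReal (y - x)) ?_]
          · rfl
          · apply Measurable.lintegral_prod_right (f := fun y x =>
              gammaPDF α 1 x * ENNReal.ofReal (y - x))
            change Measurable ((fun z : ℝ × ℝ => gammaPDF α 1 z.2) * (fun z : ℝ × ℝ => ENNReal.ofReal (z.1 - z.2)))
            apply Measurable.mul
            · exact ((measurable_gammaPDFReal α 1).ennreal_ofReal).comp measurable_snd
            · exact (measurable_fst.sub measurable_snd).ennreal_ofReal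
      _ = _ := T_eval hα
  rw [hsplit, hM, hT, ← ENNReal.ofReal_add hα.le hD, ENNReal.toReal_ofReal (by linarith)]
  constructor
  · exact final_arith hα
  · rw [final_arith hα, second_arith hα]
end

section
/- For the d-dimensional Dirichlet D-norm generator constant m(α) = (1/α) E(max_{1≤i≤d} V_i) with V_1,...,V_d i.i.d. Gamma(α), one has lim_{α→0⁺} m(α) = d and lim_{α→∞} m(α) = 1. -/
open MeasureTheory ProbabilityTheory Filter

open Real Set
open scoped ENNReal

lemma gammaPDF_eq_coe_toNNReal (α : ℝ) :
    gammaPDF α 1 = fun x => ((gammaPDFReal α 1 x).toNNReal : ℝ≥0∞) := rfl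

lemma gamma_density_int {α p : ℝ} (hα : 0 < α) (hp : 0 < p) :
    Integrable (fun x => |x| ^ p) (gammaMeasure α 1) ∧
    ∫ x, |x| ^ p ∂(gammaMeasure α 1) = Real.Gamma (α + p) / Real.Gamma α := by
  have hmeas : Measurable fun x => (gammaPDFReal α 1 x).toNNReal :=
    (measurable_gammaPDFReal α 1).real_toNNReal
  have hΓ : (0:ℝ) < Real.Gamma α := Real.Gamma_pos_of_pos hα
  set F : ℝ → ℝ := fun x => (gammaPDFReal α 1 x).toNNReal • (|x| ^ p) with hF
  have hFeq : F = (Ioi (0:ℝ)).indicator (fun x => (1 / Real.Gamma α) * (Real.exp (-x) * x ^ (α + p - 1))) := by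
    funext x
    rcases lt_trichotomy x 0 with hx | hx | hx
    · rw [Set.indicator_of_notMem (by simpa using hx.not_gt)]
      simp [hF, gammaPDFReal, hx.not_ge]
    · subst hx
      rw [Set.indicator_of_notMem (by simp)]
      simp [hF, abs_zero, Real.zero_rpow hp.ne']
    · rw [Set.indicator_of_mem (show x ∈ Ioi (0:ℝ) from hx)]
      show ((gammaPDFReal α 1 x).toNNReal : ℝ) • (|x| ^ p) = _
      rw [smul_eq_mul, Real.coe_toNNReal _ (gammaPDFReal_nonneg hα one_pos x)]
      simp only [gammaPDFReal, if_pos hx.le, smul_eq_mul]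
      rw [abs_of_pos hx, Real.one_rpow, one_mul]
      rw [mul_assoc, mul_assoc, mul_comm (x ^ (α-1)), mul_assoc (rexp (-x)),
        ← Real.rpow_add hx, show p + (α - 1) = α + p - 1 by ring]
  have hint : IntegrableOn (fun x => (1 / Real.Gamma α) * (Real.exp (-x) * x ^ (α + p - 1))) (Ioi (0:ℝ)) :=
    (Real.GammaIntegral_convergent (by linarith)).const_mul _
  have hFint : Integrable F := by
    rw [hFeq]
    exact hint.integrable_indicator measurableSet_Ioi
  constructor
  · rw [gammaMeasure, gammaPDF_eq_coe_toNNReal]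
    exact (integrable_withDensity_iff_integrable_smul hmeas).2 hFint
  · rw [gammaMeasure, gammaPDF_eq_coe_toNNReal, integral_withDensity_eq_integral_smul hmeas]
    show ∫ x, F x = _
    rw [hFeq, integral_indicator measurableSet_Ioi, integral_const_mul,
      ← Real.Gamma_eq_integral (by linarith : (0:ℝ) < α + p)]
    ring

lemma gamma_ae_nonneg {α : ℝ} : ∀ᵐ x ∂(gammaMeasure α 1), 0 ≤ x := by
  rw [ae_iff]
  have : {x : ℝ | ¬ 0 ≤ x} = Iio 0 := by ext x; simp only [Set.mem_setOf_eq, Set.mem_Iio, not_le]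
  rw [this, gammaMeasure, withDensity_apply _ measurableSet_Iio]
  exact lintegral_gammaPDF_of_nonpos le_rfl

lemma gamma_int_id {α : ℝ} (hα : 0 < α) :
    Integrable (fun x => x) (gammaMeasure α 1) ∧ ∫ x, x ∂(gammaMeasure α 1) = α := by
  obtain ⟨h1, h2⟩ := gamma_density_int hα one_pos
  have hae : (fun x => |x| ^ (1:ℝ)) =ᵐ[gammaMeasure α 1] fun x => x := by
    filter_upwards [gamma_ae_nonneg] with x hx
    rw [Real.rpow_one, abs_of_nonneg hx]
  refine ⟨h1.congr hae, ?_⟩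
  rw [← integral_congr_ae hae, h2, Real.Gamma_add_one hα.ne', mul_div_assoc,
    div_self (Real.Gamma_pos_of_pos hα).ne', mul_one]

lemma gamma_int_sq {α : ℝ} (hα : 0 < α) :
    Integrable (fun x => x ^ 2) (gammaMeasure α 1) ∧
    ∫ x, x ^ 2 ∂(gammaMeasure α 1) = α * (α + 1) := by
  obtain ⟨h1, h2⟩ := gamma_density_int hα two_pos
  have heq : (fun x : ℝ => |x| ^ (2:ℝ)) = fun x => x ^ 2 := by
    funext x
    have h2 : |x| ^ (2:ℝ) = |x| ^ (2:ℕ) := by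
      rw [← Real.rpow_natCast]; norm_num
    rw [h2, sq_abs]
  rw [heq] at h1 h2
  refine ⟨h1, ?_⟩
  rw [h2, show α + 2 = (α + 1) + 1 by ring, Real.Gamma_add_one (by linarith),
    Real.Gamma_add_one hα.ne']
  have := (Real.Gamma_pos_of_pos hα).ne'
  field_simp

lemma gamma_int_sqrt {α : ℝ} (hα : 0 < α) :
    Integrable (fun x => |x| ^ ((1:ℝ)/2)) (gammaMeasure α 1) ∧
    ∫ x, |x| ^ ((1:ℝ)/2) ∂(gammaMeasure α 1) = Real.Gamma (α + 1/2) / Real.Gamma α :=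
  gamma_density_int hα (by norm_num)

lemma gamma_var {α : ℝ} (hα : 0 < α) :
    Integrable (fun x => (x - α)^2) (gammaMeasure α 1) ∧
    ∫ x, (x - α)^2 ∂(gammaMeasure α 1) = α := by
  have : IsProbabilityMeasure (gammaMeasure α 1) := isProbabilityMeasure_gammaMeasure hα one_pos
  obtain ⟨hid, hid'⟩ := gamma_int_id hα
  obtain ⟨hsq, hsq'⟩ := gamma_int_sq hα
  have h1 : Integrable (fun a : ℝ => a^2 - 2*α*a) (gammaMeasure α 1) := by
    exact hsq.sub (hid.const_mul _)
  have h2 : Integrable (fun a : ℝ => a^2 - 2*α*a + α^2) (gammaMeasure α 1) := by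
    exact h1.add (integrable_const _)
  have heq : (fun x : ℝ => (x - α)^2) = fun x => x^2 - 2*α*x + α^2 := by funext x; ring
  rw [heq]
  refine ⟨h2, ?_⟩
  rw [integral_add h1 (integrable_const _), integral_sub hsq (hid.const_mul _),
    integral_const_mul, hsq', hid', integral_const]
  simp only [measure_univ, probReal_univ, smul_eq_mul, one_mul]
  ring

lemma gamma_absdev {α : ℝ} (hα : 0 < α) :
    Integrable (fun x => |x - α|) (gammaMeasure α 1) ∧
    ∫ x, |x - α| ∂(gammaMeasure α 1) ≤ Real.sqrt α := by
  have : IsProbabilityMeasure (gammaMeasure α 1) := isProbabilityMeasure_gammaMeasure hα one_pos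
  obtain ⟨hid, _⟩ := gamma_int_id hα
  obtain ⟨hv, hv'⟩ := gamma_var hα
  have hint : Integrable (fun x => |x - α|) (gammaMeasure α 1) :=
    (hid.sub (integrable_const α)).abs.congr (by
      filter_upwards with x
      simp [Pi.sub_apply])
  refine ⟨hint, ?_⟩
  have hs : (0:ℝ) < Real.sqrt α := Real.sqrt_pos.2 hα
  have hbound : ∀ x : ℝ, |x - α| ≤ (x - α)^2 * (2 * Real.sqrt α)⁻¹ + Real.sqrt α / 2 := by
    intro x
    rw [← div_eq_mul_inv, div_add' _ _ _ (by positivity), le_div_iff₀ (by positivity)]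
    nlinarith [sq_nonneg (|x - α| - Real.sqrt α), sq_abs (x - α), abs_nonneg (x - α),
      Real.sq_sqrt hα.le]
  have hint2 : Integrable (fun x => (x - α)^2 * (2 * Real.sqrt α)⁻¹ + Real.sqrt α / 2)
      (gammaMeasure α 1) := (hv.mul_const _).add (integrable_const _)
  calc ∫ x, |x - α| ∂(gammaMeasure α 1)
      ≤ ∫ x, ((x - α)^2 * (2 * Real.sqrt α)⁻¹ + Real.sqrt α / 2) ∂(gammaMeasure α 1) :=
        integral_mono hint hint2 hbound
    _ = Real.sqrt α := by
        rw [integral_add (hv.mul_const _) (integrable_const _), integral_mul_const, hv',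
          integral_const]
        simp only [measure_univ, probReal_univ, smul_eq_mul, one_mul]
        have hss : Real.sqrt α * Real.sqrt α = α := Real.mul_self_sqrt hα.le
        field_simp
        nlinarith [hss]

lemma pi_integrable_prod {n : ℕ} (μ : Measure ℝ) [IsProbabilityMeasure μ]
    (f : Fin n → ℝ → ℝ) (hf : ∀ i, Integrable (f i) μ) :
    Integrable (fun v : Fin n → ℝ => ∏ i, f i (v i)) (Measure.pi fun _ => μ) := by
  induction n with
  | zero => simp [integrable_const_iff]
  | succ n n_ih =>
      have hmp := ((measurePreserving_piFinSuccAbove (fun _ : Fin (n+1) => μ) 0).symm)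
      rw [← hmp.integrable_comp_emb (MeasurableEquiv.measurableEmbedding _)]
      simp_rw [MeasurableEquiv.piFinSuccAbove_symm_apply, Fin.insertNthEquiv,
        Fin.prod_univ_succ, Fin.insertNth_zero]
      simp only [Fin.zero_succAbove, Function.comp_def, Fin.cons_zero, Fin.cons_succ,
        Equiv.coe_fn_mk]
      have h2 : Integrable (fun (x : Fin n → ℝ) ↦ ∏ j, f (Fin.succ j) (x j))
          (Measure.pi fun _ => μ) := n_ih (fun i => f i.succ) (fun i ↦ hf _)
      exact Integrable.mul_prod (hf 0) h2

lemma pi_integral_prod {n : ℕ} (μ : Measure ℝ) [IsProbabilityMeasure μ]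
    (f : Fin n → ℝ → ℝ) :
    ∫ v : Fin n → ℝ, ∏ i, f i (v i) ∂(Measure.pi fun _ => μ) = ∏ i, ∫ x, f i x ∂μ := by
  induction n with
  | zero =>
      simp only [Finset.univ_eq_empty, Finset.prod_empty, integral_const, measure_univ,
        probReal_univ, one_smul]
  | succ n n_ih =>
      calc
        _ = ∫ x : ℝ × (Fin n → ℝ),
            f 0 x.1 * ∏ i : Fin n, f (Fin.succ i) (x.2 i) ∂(μ.prod (Measure.pi fun _ => μ)) := by
          rw [← ((measurePreserving_piFinSuccAbove
            (fun _ : Fin (n+1) => μ) 0).symm).integral_comp']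
          simp [MeasurableEquiv.piFinSuccAbove_symm_apply, Fin.insertNthEquiv,
            Fin.prod_univ_succ, Fin.insertNth_zero]
        _ = (∫ x, f 0 x ∂μ) * ∏ i : Fin n, ∫ x, f (Fin.succ i) x ∂μ := by
          rw [← n_ih (fun i => f i.succ), ← integral_prod_mul]
        _ = ∏ i, ∫ x, f i x ∂μ := by rw [Fin.prod_univ_succ]

lemma pi_marginal {d : ℕ} (μ : Measure ℝ) [IsProbabilityMeasure μ]
    (f : ℝ → ℝ) (hf : Integrable f μ) (i : Fin d) :
    Integrable (fun v : Fin d → ℝ => f (v i)) (Measure.pi fun _ => μ) ∧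
    ∫ v : Fin d → ℝ, f (v i) ∂(Measure.pi fun _ => μ) = ∫ x, f x ∂μ := by
  classical
  set F : Fin d → ℝ → ℝ := fun l x => if l = i then f x else 1 with hFdef
  have hprod : ∀ v : Fin d → ℝ, (∏ l, F l (v l)) = f (v i) := by
    intro v
    simp only [hFdef]
    rw [Finset.prod_ite_eq' Finset.univ i (fun l => f (v l))]
    simp
  have hint : ∀ l, Integrable (F l) μ := by
    intro l
    by_cases h : l = i <;> simp [hFdef, h, hf, integrable_const]
  constructor
  · have := pi_integrable_prod μ F hint
    refine this.congr (by filter_upwards with v using hprod v)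
  · rw [show (fun v : Fin d → ℝ => f (v i)) = fun v => ∏ l, F l (v l) by
      funext v; rw [hprod]]
    rw [pi_integral_prod μ F]
    calc ∏ l, ∫ x, F l x ∂μ = ∏ l, (if l = i then ∫ x, f x ∂μ else 1) := by
          refine Finset.prod_congr rfl fun l _ => ?_
          by_cases h : l = i <;> simp [hFdef, h]
      _ = ∫ x, f x ∂μ := by
          rw [Finset.prod_ite_eq' Finset.univ i (fun _ => ∫ x, f x ∂μ)]
          simp

lemma pi_marginal2 {d : ℕ} (μ : Measure ℝ) [IsProbabilityMeasure μ]
    (f g : ℝ → ℝ) (hf : Integrable f μ) (hg : Integrable g μ) {i j : Fin d} (hij : i ≠ j) :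
    Integrable (fun v : Fin d → ℝ => f (v i) * g (v j)) (Measure.pi fun _ => μ) ∧
    ∫ v : Fin d → ℝ, f (v i) * g (v j) ∂(Measure.pi fun _ => μ)
      = (∫ x, f x ∂μ) * ∫ x, g x ∂μ := by
  classical
  set F : Fin d → ℝ → ℝ := fun l x => if l = i then f x else if l = j then g x else 1 with hFdef
  have hprod : ∀ h : ℝ → ℝ, (∀ l : Fin d, (if l = i then f else if l = j then g
      else fun _ => (1:ℝ)) = F l) → True := fun _ _ => trivial
  have key : ∀ v : Fin d → ℝ, (∏ l, F l (v l)) = f (v i) * g (v j) := by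
    intro v
    have hjmem : j ∈ Finset.univ.erase i := by
      simp [Finset.mem_erase, hij.symm]
    rw [← Finset.mul_prod_erase Finset.univ (fun l => F l (v l)) (Finset.mem_univ i),
      ← Finset.mul_prod_erase _ (fun l => F l (v l)) hjmem]
    have h1 : F i (v i) = f (v i) := by simp [hFdef]
    have h2 : F j (v j) = g (v j) := by simp [hFdef, hij.symm]
    have h3 : ∏ l ∈ (Finset.univ.erase i).erase j, F l (v l) = 1 := by
      refine Finset.prod_eq_one fun l hl => ?_
      simp only [Finset.mem_erase] at hl
      simp [hFdef, hl.1, hl.2.1]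
    rw [h1, h2, h3]
    ring
  have hint : ∀ l, Integrable (F l) μ := by
    intro l
    by_cases h : l = i
    · simpa [hFdef, h] using hf
    · by_cases h' : l = j
      · simpa [hFdef, h, h', hij.symm] using hg
      · simpa [hFdef, h, h'] using integrable_const (1:ℝ) (μ := μ)
  constructor
  · exact (pi_integrable_prod μ F hint).congr (by filter_upwards with v using key v)
  · rw [show (fun v : Fin d → ℝ => f (v i) * g (v j)) = fun v => ∏ l, F l (v l) by
      funext v; rw [key]]
    rw [pi_integral_prod μ F]
    have hjmem : j ∈ Finset.univ.erase i := by simp [Finset.mem_erase, hij.symm]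
    rw [← Finset.mul_prod_erase Finset.univ (fun l => ∫ x, F l x ∂μ) (Finset.mem_univ i),
      ← Finset.mul_prod_erase _ (fun l => ∫ x, F l x ∂μ) hjmem]
    have h1 : ∫ x, F i x ∂μ = ∫ x, f x ∂μ := by simp [hFdef]
    have h2 : ∫ x, F j x ∂μ = ∫ x, g x ∂μ := by simp [hFdef, hij.symm]
    have h3 : ∏ l ∈ (Finset.univ.erase i).erase j, ∫ x, F l x ∂μ = 1 := by
      refine Finset.prod_eq_one fun l hl => ?_
      simp only [Finset.mem_erase] at hl
      simp [hFdef, hl.1, hl.2.1]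
    rw [h1, h2, h3]
    ring

lemma gamma_Iio_zero {α : ℝ} : gammaMeasure α 1 (Iio 0) = 0 := by
  rw [gammaMeasure, withDensity_apply _ measurableSet_Iio]
  exact lintegral_gammaPDF_of_nonpos le_rfl

lemma S_bounds (d : ℕ) (hd : 1 ≤ d) {α : ℝ} (hα : 0 < α) :
    α ≤ (∫ v : Fin d → ℝ, ⨆ i, v i ∂(Measure.pi fun _ => gammaMeasure α 1)) ∧
    (∫ v : Fin d → ℝ, ⨆ i, v i ∂(Measure.pi fun _ => gammaMeasure α 1)) ≤ d * α ∧
    (∫ v : Fin d → ℝ, ⨆ i, v i ∂(Measure.pi fun _ => gammaMeasure α 1))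
      ≤ α + d * Real.sqrt α ∧
    d * α - (d*d - d : ℕ) * (Real.Gamma (α + 1/2) / Real.Gamma α)^2
      ≤ (∫ v : Fin d → ℝ, ⨆ i, v i ∂(Measure.pi fun _ => gammaMeasure α 1)) := by
  classical
  haveI instμ : IsProbabilityMeasure (gammaMeasure α 1) := isProbabilityMeasure_gammaMeasure hα one_pos
  set μ := gammaMeasure α 1 with hμ
  set P : Measure (Fin d → ℝ) := Measure.pi fun _ => μ with hP
  haveI : Nonempty (Fin d) := ⟨⟨0, hd⟩⟩
  have i0 : Fin d := ⟨0, hd⟩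
  -- a.e. nonneg coordinates
  have h_ae : ∀ᵐ v ∂P, ∀ i, 0 ≤ v i := by
    rw [ae_all_iff]
    intro i
    rw [ae_iff]
    have hset : {v : Fin d → ℝ | ¬ 0 ≤ v i} = Function.eval i ⁻¹' (Iio 0) := by
      ext v; simp only [Set.mem_setOf_eq, Set.mem_preimage, Function.eval, Set.mem_Iio, not_le]
    rw [hset]
    exact Measure.pi_eval_preimage_null _ gamma_Iio_zero
  obtain ⟨hid_int, hid_eq⟩ := gamma_int_id hα
  obtain ⟨hdev_int, hdev_le⟩ := gamma_absdev hα
  obtain ⟨hsqrt_int, hsqrt_eq⟩ := gamma_int_sqrt hα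
  -- coordinate functions
  have hcoord : ∀ i : Fin d, Integrable (fun v : Fin d → ℝ => v i) P ∧
      ∫ v : Fin d → ℝ, v i ∂P = α := by
    intro i
    obtain ⟨h1, h2⟩ := pi_marginal μ (fun x => x) hid_int i
    exact ⟨h1, by rw [h2, hid_eq]⟩
  have hsum_int : Integrable (fun v : Fin d → ℝ => ∑ i, v i) P :=
    integrable_finset_sum _ (fun i _ => (hcoord i).1)
  have hsum_eq : ∫ v : Fin d → ℝ, ∑ i, v i ∂P = d * α := by
    rw [integral_finset_sum _ (fun i _ => (hcoord i).1)]
    simp [(hcoord _).2, Finset.sum_const, mul_comm]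
  have hsupmeas : Measurable (fun v : Fin d → ℝ => ⨆ i, v i) :=
    Measurable.iSup (fun i => measurable_pi_apply i)
  have hbdd : ∀ v : Fin d → ℝ, BddAbove (Set.range v) :=
    fun v => (Set.finite_range v).bddAbove
  have hsup_int : Integrable (fun v : Fin d → ℝ => ⨆ i, v i) P := by
    refine Integrable.mono' hsum_int hsupmeas.aestronglyMeasurable ?_
    filter_upwards [h_ae] with v hv
    rw [Real.norm_eq_abs, abs_of_nonneg (le_trans (hv i0) (le_ciSup (hbdd v) i0))]
    exact ciSup_le fun i => Finset.single_le_sum (fun j _ => hv j) (Finset.mem_univ i)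
  refine ⟨?_, ?_, ?_, ?_⟩
  · -- α ≤ S
    rw [← (hcoord i0).2]
    exact integral_mono (hcoord i0).1 hsup_int (fun v => le_ciSup (hbdd v) i0)
  · -- S ≤ d α
    rw [← hsum_eq]
    refine integral_mono_ae hsup_int hsum_int ?_
    filter_upwards [h_ae] with v hv
    exact ciSup_le fun i => Finset.single_le_sum (fun j _ => hv j) (Finset.mem_univ i)
  · -- S ≤ α + d √α
    have hub_int : Integrable (fun v : Fin d → ℝ => α + ∑ i, |v i - α|) P :=
      (integrable_const α).add (integrable_finset_sum _
        (fun i _ => (pi_marginal μ (fun x => |x - α|) hdev_int i).1))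
    have hub : ∀ v : Fin d → ℝ, (⨆ i, v i) ≤ α + ∑ i, |v i - α| := by
      intro v
      refine ciSup_le fun i => ?_
      have h1 : v i ≤ α + |v i - α| := by
        have := le_abs_self (v i - α); linarith
      have h2 : |v i - α| ≤ ∑ j, |v j - α| :=
        Finset.single_le_sum (f := fun j => |v j - α|) (fun j _ => abs_nonneg _)
          (Finset.mem_univ i)
      linarith
    calc (∫ v : Fin d → ℝ, ⨆ i, v i ∂P) ≤ ∫ v : Fin d → ℝ, (α + ∑ i, |v i - α|) ∂P :=
          integral_mono hsup_int hub_int hub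
      _ = α + ∑ i : Fin d, ∫ v : Fin d → ℝ, |v i - α| ∂P := by
          rw [integral_add (integrable_const α) (integrable_finset_sum _
            (fun i _ => (pi_marginal μ (fun x => |x - α|) hdev_int i).1)), integral_const,
            integral_finset_sum _ (fun i _ => (pi_marginal μ (fun x => |x - α|) hdev_int i).1)]
          simp
          rfl
      _ ≤ α + d * Real.sqrt α := by
          have : ∀ i : Fin d, ∫ v : Fin d → ℝ, |v i - α| ∂P ≤ Real.sqrt α := by
            intro i
            rw [(pi_marginal μ (fun x => |x - α|) hdev_int i).2]
            exact hdev_le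
          have hsum := Finset.sum_le_sum (fun i (_ : i ∈ Finset.univ) => this i)
          rw [Finset.sum_const, Finset.card_univ, Fintype.card_fin] at hsum
          have : (d : ℝ) * Real.sqrt α = d • Real.sqrt α := by simp
          linarith [hsum, this.ge]
  · -- lower bound near 0
    set q : ℝ → ℝ := fun x => |x| ^ ((1:ℝ)/2) with hqdef
    have hpair : ∀ p : Fin d × Fin d, p ∈ Finset.univ.offDiag →
        Integrable (fun v : Fin d → ℝ => q (v p.1) * q (v p.2)) P ∧
        ∫ v : Fin d → ℝ, q (v p.1) * q (v p.2) ∂P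
          = (Real.Gamma (α + 1/2) / Real.Gamma α)^2 := by
      intro p hp
      have hne : p.1 ≠ p.2 := (Finset.mem_offDiag.1 hp).2.2
      obtain ⟨h1, h2⟩ := pi_marginal2 μ q q hsqrt_int hsqrt_int hne
      exact ⟨h1, by rw [h2, hsqrt_eq, sq]⟩
    have hQ_int : Integrable (fun v : Fin d → ℝ =>
        ∑ p ∈ Finset.univ.offDiag, q (v p.1) * q (v p.2)) P :=
      integrable_finset_sum _ (fun p hp => (hpair p hp).1)
    have hlow_int : Integrable (fun v : Fin d → ℝ =>
        (∑ i, v i) - ∑ p ∈ Finset.univ.offDiag, q (v p.1) * q (v p.2)) P :=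
      hsum_int.sub hQ_int
    have hlow : ∀ᵐ v ∂P, (∑ i, v i) - (∑ p ∈ Finset.univ.offDiag, q (v p.1) * q (v p.2))
        ≤ ⨆ i, v i := by
      filter_upwards [h_ae] with v hv
      obtain ⟨k, hk⟩ := Finite.exists_max v
      have hsup_eq : (⨆ i, v i) = v k := le_antisymm (ciSup_le hk) (le_ciSup (hbdd v) k)
      rw [hsup_eq, sub_le_iff_le_add, ← sub_le_iff_le_add']
      rw [← Finset.sum_erase_eq_sub (Finset.mem_univ k)]
      have step1 : ∑ i ∈ Finset.univ.erase k, v i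
          ≤ ∑ i ∈ Finset.univ.erase k, q (v i) * q (v k) := by
        refine Finset.sum_le_sum fun i _ => ?_
        have h0i := hv i
        have h0k := hv k
        have : q (v i) = Real.sqrt (v i) := by
          rw [hqdef]; simp only []
          rw [abs_of_nonneg h0i, ← Real.sqrt_eq_rpow]
        have hk' : q (v k) = Real.sqrt (v k) := by
          rw [hqdef]; simp only []
          rw [abs_of_nonneg h0k, ← Real.sqrt_eq_rpow]
        rw [this, hk']
        calc v i = Real.sqrt (v i) * Real.sqrt (v i) := (Real.mul_self_sqrt h0i).symm
          _ ≤ Real.sqrt (v i) * Real.sqrt (v k) := by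
              exact mul_le_mul_of_nonneg_left (Real.sqrt_le_sqrt (hk i)) (Real.sqrt_nonneg _)
      have step2 : ∑ i ∈ Finset.univ.erase k, q (v i) * q (v k)
          ≤ ∑ p ∈ Finset.univ.offDiag, q (v p.1) * q (v p.2) := by
        have himg : (Finset.univ.erase k).image (fun i => (i, k))
            ⊆ (Finset.univ : Finset (Fin d)).offDiag := by
          intro p hp
          simp only [Finset.mem_image, Finset.mem_erase] at hp
          obtain ⟨i, ⟨hik, _⟩, rfl⟩ := hp
          exact Finset.mem_offDiag.2 ⟨Finset.mem_univ _, Finset.mem_univ _, hik⟩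
        have heq : ∑ i ∈ Finset.univ.erase k, q (v i) * q (v k)
            = ∑ p ∈ (Finset.univ.erase k).image (fun i => (i, k)), q (v p.1) * q (v p.2) := by
          rw [Finset.sum_image (fun i _ j _ h => by simpa using congrArg Prod.fst h)]
        rw [heq]
        refine Finset.sum_le_sum_of_subset_of_nonneg himg fun p _ _ => ?_
        have : 0 ≤ q (v p.1) := Real.rpow_nonneg (abs_nonneg _) _
        have : 0 ≤ q (v p.2) := Real.rpow_nonneg (abs_nonneg _) _
        positivity
      exact le_trans step1 step2
    have hQ_eq : ∫ v : Fin d → ℝ, (∑ p ∈ Finset.univ.offDiag, q (v p.1) * q (v p.2)) ∂P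
        = (d*d - d : ℕ) * (Real.Gamma (α + 1/2) / Real.Gamma α)^2 := by
      rw [integral_finset_sum _ (fun p hp => (hpair p hp).1)]
      rw [Finset.sum_congr rfl (fun p hp => (hpair p hp).2), Finset.sum_const,
        Finset.offDiag_card, Finset.card_univ, Fintype.card_fin]
      simp [nsmul_eq_mul]
    calc (d:ℝ) * α - (d*d - d : ℕ) * (Real.Gamma (α + 1/2) / Real.Gamma α)^2
        = ∫ v : Fin d → ℝ, ((∑ i, v i) - ∑ p ∈ Finset.univ.offDiag, q (v p.1) * q (v p.2)) ∂P := by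
          rw [integral_sub hsum_int hQ_int, hsum_eq, hQ_eq]
      _ ≤ ∫ v : Fin d → ℝ, ⨆ i, v i ∂P := integral_mono_ae hlow_int hsup_int hlow

lemma sqrt_tendsto_atTop : Tendsto Real.sqrt atTop atTop := by
  have : Real.sqrt = fun x : ℝ => x ^ ((1:ℝ)/2) := by
    funext x; exact Real.sqrt_eq_rpow x
  rw [this]
  exact tendsto_rpow_atTop (by norm_num)


/-- The generator constant of the d-dimensional Dirichlet D-norm,
`m(α) = (1/α) E (max_i Vᵢ)` with `V₁,...,V_d` i.i.d. Gamma(α). -/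
noncomputable def dirichletGeneratorConstant (d : ℕ) (α : ℝ) : ℝ :=
  (1 / α) * ∫ v : Fin d → ℝ, ⨆ i, v i ∂(Measure.pi fun _ => gammaMeasure α 1)

/-- Limits of the Dirichlet generator constant:
`m(α) → d` as `α → 0⁺` and `m(α) → 1` as `α → ∞`. -/
theorem dirichlet_generator_constant_limits (d : ℕ) (hd : 2 ≤ d) :
    Tendsto (dirichletGeneratorConstant d) (nhdsWithin 0 (Set.Ioi 0))
        (nhds d) ∧
      Tendsto (dirichletGeneratorConstant d) atTop (nhds 1) := by
  have hd1 : 1 ≤ d := by omega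
  have hdpos : (0:ℝ) < d := by positivity
  set m := dirichletGeneratorConstant d with hm
  have hmdef : ∀ α : ℝ, m α = (1/α) * ∫ v : Fin d → ℝ, ⨆ i, v i
      ∂(Measure.pi fun _ => gammaMeasure α 1) := fun _ => rfl
  constructor
  · -- α → 0⁺
    set K : ℝ := ((d*d - d : ℕ) : ℝ) with hK
    set L : ℝ → ℝ := fun α =>
      d - K * (α * (Real.Gamma (α + 1/2) / Real.Gamma (α + 1))^2) with hL
    have hlow : ∀ᶠ α in nhdsWithin 0 (Set.Ioi 0), L α ≤ m α := by
      filter_upwards [self_mem_nhdsWithin] with α (hα : (0:ℝ) < α)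
      obtain ⟨-, -, -, h4⟩ := S_bounds d hd1 hα
      have hΓpos : (0:ℝ) < Real.Gamma α := Real.Gamma_pos_of_pos hα
      have hγ : Real.Gamma (α + 1) = α * Real.Gamma α := Real.Gamma_add_one hα.ne'
      have hrw : K * (α * (Real.Gamma (α + 1/2) / Real.Gamma (α + 1))^2)
          = (1/α) * (K * (Real.Gamma (α + 1/2) / Real.Gamma α)^2) := by
        rw [hγ]
        field_simp
      have := mul_le_mul_of_nonneg_left h4 (le_of_lt (one_div_pos.2 hα))
      rw [hmdef α]
      calc L α = (1/α) * (d * α - K * (Real.Gamma (α + 1/2) / Real.Gamma α)^2) := by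
            rw [hL]
            simp only []
            rw [mul_sub, hrw]
            congr 1
            field_simp
        _ ≤ _ := this
    have hup : ∀ᶠ α in nhdsWithin 0 (Set.Ioi 0), m α ≤ d := by
      filter_upwards [self_mem_nhdsWithin] with α (hα : (0:ℝ) < α)
      obtain ⟨-, h2, -, -⟩ := S_bounds d hd1 hα
      have := mul_le_mul_of_nonneg_left h2 (le_of_lt (one_div_pos.2 hα))
      rw [hmdef α]
      calc (1/α) * ∫ v : Fin d → ℝ, ⨆ i, v i ∂(Measure.pi fun _ => gammaMeasure α 1)
          ≤ (1/α) * (d * α) := this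
        _ = d := by field_simp
    have hcont1 : ContinuousAt Real.Gamma (1/2) := by
      refine (Real.differentiableAt_Gamma fun n => ?_).continuousAt
      have h0 : (0:ℝ) ≤ n := Nat.cast_nonneg n
      exact ne_of_gt (by linarith)
    have hcont2 : ContinuousAt Real.Gamma 1 := by
      refine (Real.differentiableAt_Gamma fun n => ?_).continuousAt
      have h0 : (0:ℝ) ≤ n := Nat.cast_nonneg n
      exact ne_of_gt (by linarith)
    have hg1 : Tendsto (fun α : ℝ => Real.Gamma (α + 1/2)) (nhds 0) (nhds (Real.Gamma (1/2))) := by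
      have h1 : Tendsto (fun α : ℝ => α + 1/2) (nhds 0) (nhds (1/2)) := by
        simpa using (continuous_add_right (1/2:ℝ)).tendsto (0:ℝ)
      exact hcont1.tendsto.comp h1
    have hg2 : Tendsto (fun α : ℝ => Real.Gamma (α + 1)) (nhds 0) (nhds 1) := by
      have h1 : Tendsto (fun α : ℝ => α + 1) (nhds 0) (nhds 1) := by
        simpa using (continuous_add_right (1:ℝ)).tendsto (0:ℝ)
      simpa [Real.Gamma_one, Function.comp_def] using hcont2.tendsto.comp h1
    have hLtend : Tendsto L (nhdsWithin 0 (Set.Ioi 0)) (nhds d) := by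
      have h1 : Tendsto (fun α : ℝ => α * (Real.Gamma (α + 1/2) / Real.Gamma (α + 1))^2)
          (nhds 0) (nhds (0 * (Real.Gamma (1/2) / 1)^2)) :=
        tendsto_id.mul (((hg1.div hg2 one_ne_zero)).pow 2)
      rw [zero_mul] at h1
      have h2 : Tendsto L (nhds 0) (nhds (d - K * 0)) :=
        tendsto_const_nhds.sub (tendsto_const_nhds.mul h1)
      rw [mul_zero, sub_zero] at h2
      exact h2.mono_left nhdsWithin_le_nhds
    exact tendsto_of_tendsto_of_tendsto_of_le_of_le' hLtend tendsto_const_nhds hlow hup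
  · -- α → ∞
    have hlow : ∀ᶠ α in atTop, (1:ℝ) ≤ m α := by
      filter_upwards [eventually_gt_atTop (0:ℝ)] with α hα
      obtain ⟨h1, -, -, -⟩ := S_bounds d hd1 hα
      have := mul_le_mul_of_nonneg_left h1 (le_of_lt (one_div_pos.2 hα))
      rw [hmdef α]
      calc (1:ℝ) = (1/α) * α := by field_simp
        _ ≤ _ := this
    have hup : ∀ᶠ α in atTop, m α ≤ 1 + d / Real.sqrt α := by
      filter_upwards [eventually_gt_atTop (0:ℝ)] with α hα
      obtain ⟨-, -, h3, -⟩ := S_bounds d hd1 hα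
      have hs : (0:ℝ) < Real.sqrt α := Real.sqrt_pos.2 hα
      have hss : Real.sqrt α * Real.sqrt α = α := Real.mul_self_sqrt hα.le
      have := mul_le_mul_of_nonneg_left h3 (le_of_lt (one_div_pos.2 hα))
      rw [hmdef α]
      calc (1/α) * ∫ v : Fin d → ℝ, ⨆ i, v i ∂(Measure.pi fun _ => gammaMeasure α 1)
          ≤ (1/α) * (α + d * Real.sqrt α) := this
        _ = 1 + d / Real.sqrt α := by
            field_simp
            nlinarith [hss]
    have hUtend : Tendsto (fun α : ℝ => 1 + d / Real.sqrt α) atTop (nhds 1) := by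
      have : Tendsto (fun α : ℝ => (d:ℝ) / Real.sqrt α) atTop (nhds 0) :=
        Tendsto.div_atTop tendsto_const_nhds sqrt_tendsto_atTop
      simpa using tendsto_const_nhds.add this
    exact tendsto_of_tendsto_of_tendsto_of_le_of_le' tendsto_const_nhds hUtend hlow hup
end

section
/- Let V_{ij}, 1 ≤ i ≤ d, 1 ≤ j ≤ n, n ≥ 2, be an array of i.i.d. integrable real random variables. Then for any real numbers x_1,...,x_d: E(max_{1≤i≤d} x_i · (Σ_{j=1}^n V_{ij})/n) ≤ E(max_{1≤i≤d} x_i · (Σ_{j=1}^{n−1} V_{ij})/(n−1)). -/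
open MeasureTheory ProbabilityTheory

section Aux

variable {Ω : Type*} [MeasurableSpace Ω] {μ : Measure Ω} [IsProbabilityMeasure μ]

/-- The joint law of finitely many members of an independent family is the product
of the marginal laws. -/
lemma aux_joint_law {ι κ : Type*} [Fintype κ] (X : ι → Ω → ℝ)
    (hmeas : ∀ i, Measurable (X i))
    (hindep : iIndepFun X μ)
    (f : κ → ι) (hf : Function.Injective f) :
    μ.map (fun ω (k : κ) => X (f k) ω)
      = Measure.pi (fun k => μ.map (X (f k))) := by
  classical
  have hF : Measurable (fun ω (k : κ) => X (f k) ω) :=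
    measurable_pi_lambda _ fun k => hmeas _
  haveI : ∀ k : κ, SigmaFinite (μ.map (X (f k))) := fun k => by
    haveI : IsProbabilityMeasure (μ.map (X (f k))) :=
      Measure.isProbabilityMeasure_map (hmeas _).aemeasurable
    infer_instance
  refine (Measure.pi_eq ?_).symm
  intro s hs
  rw [Measure.map_apply hF (MeasurableSet.univ_pi hs)]
  set sets : ι → Set ℝ := fun p => if h : ∃ k, f k = p then s h.choose else Set.univ
    with hsets
  have hset_sets : ∀ k, sets (f k) = s k := by
    intro k
    have h : ∃ k', f k' = f k := ⟨k, rfl⟩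
    simp only [hsets, dif_pos h]
    rw [hf h.choose_spec]
  have hmeas_sets : ∀ p ∈ Finset.univ.image f, MeasurableSet (sets p) := by
    intro p hp
    simp only [Finset.mem_image] at hp
    obtain ⟨k, _, rfl⟩ := hp
    rw [hset_sets]; exact hs k
  have key := hindep.measure_inter_preimage_eq_mul (Finset.univ.image f) hmeas_sets
  have hpre : (fun ω (k : κ) => X (f k) ω) ⁻¹' Set.pi Set.univ s
      = ⋂ p ∈ Finset.univ.image f, X p ⁻¹' sets p := by
    ext ω
    simp only [Set.mem_preimage, Set.mem_pi, Set.mem_univ, forall_true_left,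
      Set.mem_iInter, Finset.mem_image, Finset.mem_univ, true_and]
    constructor
    · rintro h p ⟨k, rfl⟩
      rw [hset_sets]; exact h k
    · intro h k
      have := h (f k) ⟨k, rfl⟩
      rwa [hset_sets] at this
  rw [hpre, key]
  rw [Finset.prod_image (fun a _ b _ h => hf h)]
  refine Finset.prod_congr rfl fun k _ => ?_
  rw [hset_sets, Measure.map_apply (hmeas _) (hs k)]

/-- A finite supremum of integrable functions is integrable. -/
lemma aux_integrable_iSup {d : ℕ} (hd : 0 < d) (g : Fin d → Ω → ℝ)
    (hg : ∀ i, Integrable (g i) μ) (hgm : ∀ i, Measurable (g i)) :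
    Integrable (fun ω => ⨆ i, g i ω) μ := by
  haveI : Nonempty (Fin d) := ⟨⟨0, hd⟩⟩
  have hmeas : Measurable (fun ω => ⨆ i, g i ω) := Measurable.iSup hgm
  refine Integrable.mono' (g := fun ω => ∑ i, |g i ω|)
    (integrable_finset_sum _ fun i _ => (hg i).abs) hmeas.aestronglyMeasurable
    (Filter.Eventually.of_forall fun ω => ?_)
  rw [Real.norm_eq_abs, abs_le]
  constructor
  · have i₀ : Fin d := Classical.arbitrary _
    have h1 : -∑ i, |g i ω| ≤ g i₀ ω := by
      have : |g i₀ ω| ≤ ∑ i, |g i ω| :=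
        Finset.single_le_sum (f := fun i => |g i ω|) (fun i _ => abs_nonneg _)
          (Finset.mem_univ i₀)
      linarith [neg_abs_le (g i₀ ω)]
    exact h1.trans (le_ciSup (f := fun i => g i ω)
      (Set.Finite.bddAbove (Set.finite_range _)) i₀)
  · exact ciSup_le fun i => (le_abs_self _).trans
      (Finset.single_le_sum (f := fun i => |g i ω|) (fun i _ => abs_nonneg _)
        (Finset.mem_univ i))

end Aux

/-- For an i.i.d. integrable array `V_{ij}`, the expected maximum of the
row averages is decreasing in the number `n` of averaged columns:
`E(max_i xᵢ (∑_{j<n} V_{ij})/n) ≤ E(max_i xᵢ (∑_{j<n-1} V_{ij})/(n-1))`. -/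
theorem expected_max_of_averages_decreasing (d : ℕ) (hd : 0 < d) (n : ℕ)
    (hn : 2 ≤ n)
    {Ω : Type*} [MeasurableSpace Ω] (μ : Measure Ω) [IsProbabilityMeasure μ]
    (V : Fin d → ℕ → Ω → ℝ)
    (hmeas : ∀ i j, Measurable (V i j))
    (hindep : iIndepFun
      (fun p : Fin d × ℕ => V p.1 p.2) μ)
    (hident : ∀ i j i' j', μ.map (V i j) = μ.map (V i' j'))
    (hint : ∀ i j, Integrable (V i j) μ)
    (x : Fin d → ℝ) :
    ∫ ω, ⨆ i, x i * ((∑ j ∈ Finset.range n, V i j ω) / n) ∂μ ≤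
      ∫ ω, ⨆ i, x i * ((∑ j ∈ Finset.range (n - 1), V i j ω) / (n - 1)) ∂μ := by
  classical
  haveI : Nonempty (Fin d) := ⟨⟨0, hd⟩⟩
  set m := n - 1 with hm_def
  have hm1 : 1 ≤ m := by omega
  have hnm : n = m + 1 := by omega
  have hmpos : (0 : ℝ) < m := by exact_mod_cast hm1
  have hnpos : (0 : ℝ) < n := by positivity
  -- the common marginal law
  set ν : Measure ℝ := μ.map (V ⟨0, hd⟩ 0) with hν
  -- the function of the matrix
  set G : (Fin d × Fin m → ℝ) → ℝ :=
    fun y => ⨆ i, x i * ((∑ j : Fin m, y (i, j)) / m) with hG_def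
  have hG : Measurable G := by
    apply Measurable.iSup
    intro i
    exact (Finset.measurable_sum _ fun j _ =>
      measurable_pi_apply (i, j)).div_const _ |>.const_mul _
  -- the key: integral of G of any injective column selection is the same
  have key : ∀ e : Fin m → ℕ, Function.Injective e →
      ∫ ω, G (fun p => V p.1 (e p.2) ω) ∂μ
        = ∫ y, G y ∂(Measure.pi (fun _ : Fin d × Fin m => ν)) := by
    intro e he
    have hfe : Function.Injective (fun p : Fin d × Fin m => (p.1, e p.2)) := by
      intro a b h
      simp only [Prod.mk.injEq] at h
      exact Prod.ext h.1 (he h.2)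
    have hFmeas : Measurable (fun ω (k : Fin d × Fin m) => V k.1 (e k.2) ω) :=
      measurable_pi_lambda _ fun k => hmeas _ _
    have hlaw := aux_joint_law (μ := μ) (fun p : Fin d × ℕ => V p.1 p.2)
      (fun p => hmeas p.1 p.2) hindep (fun p : Fin d × Fin m => (p.1, e p.2)) hfe
    have hmarg : (fun k : Fin d × Fin m => μ.map (V k.1 (e k.2)))
        = fun _ => ν := by
      funext k; exact hident _ _ _ _
    rw [← integral_map hFmeas.aemeasurable hG.stronglyMeasurable.aestronglyMeasurable] at *
    simp only [] at hlaw
    rw [hlaw, hmarg]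
  -- the column selections
  set e : ℕ → Fin m → ℕ := fun k j => if (j : ℕ) < k then (j : ℕ) else (j : ℕ) + 1
    with he_def
  have he_inj : ∀ k, Function.Injective (e k) := by
    intro k a b h
    simp only [he_def] at h
    have : (a : ℕ) = (b : ℕ) := by
      split_ifs at h with h1 h2 h2 <;> omega
    exact Fin.ext this
  -- sum identity for columns
  have hsum_e : ∀ k < n, ∀ i ω,
      (∑ j : Fin m, V i (e k j) ω)
        = (∑ j ∈ Finset.range n, V i j ω) - V i k ω := by
    intro k hk i ω
    have himg : Finset.univ.image (e k) = (Finset.range n).erase k := by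
      ext a
      simp only [Finset.mem_image, Finset.mem_univ, true_and, Finset.mem_erase,
        Finset.mem_range, he_def]
      constructor
      · rintro ⟨j, rfl⟩
        have hj := j.isLt
        split_ifs with h1 <;> omega
      · rintro ⟨hne, hlt⟩
        by_cases hak : a < k
        · exact ⟨⟨a, by omega⟩, by simp [hak]⟩
        · refine ⟨⟨a - 1, by omega⟩, ?_⟩
          have h1 : ¬ (a - 1 < k) := by omega
          simp only [h1, if_false]
          omega
    calc (∑ j : Fin m, V i (e k j) ω)
        = ∑ a ∈ Finset.univ.image (e k), V i a ω := by
          rw [Finset.sum_image (fun a _ b _ h => he_inj k h)]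
      _ = ∑ a ∈ (Finset.range n).erase k, V i a ω := by rw [himg]
      _ = (∑ j ∈ Finset.range n, V i j ω) - V i k ω :=
          Finset.sum_erase_eq_sub (Finset.mem_range.mpr hk)
  -- identify G compositions
  have hGe : ∀ k < n, ∀ ω, G (fun p => V p.1 (e k p.2) ω)
      = ⨆ i, x i * (((∑ j ∈ Finset.range n, V i j ω) - V i k ω) / m) := by
    intro k hk ω
    simp only [hG_def]
    congr 1; funext i
    rw [hsum_e k hk i ω]
  -- integrability of the sup functions
  have hint_sup_n : Integrable
      (fun ω => ⨆ i, x i * ((∑ j ∈ Finset.range n, V i j ω) / n)) μ := by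
    apply aux_integrable_iSup hd
    · intro i
      exact (((integrable_finset_sum _ fun j _ => hint i j).div_const _).const_mul _)
    · intro i
      exact ((Finset.measurable_sum _ fun j _ => hmeas i j).div_const _).const_mul _
  have hint_sup_k : ∀ k, Integrable
      (fun ω => ⨆ i, x i * (((∑ j ∈ Finset.range n, V i j ω) - V i k ω) / m)) μ := by
    intro k
    apply aux_integrable_iSup hd
    · intro i
      exact ((((integrable_finset_sum _ fun j _ => hint i j).sub (hint i k)).div_const
        _).const_mul _)
    · intro i
      exact (((Finset.measurable_sum _ fun j _ => hmeas i j).sub (hmeas i k)).div_const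
        _).const_mul _
  -- pointwise inequality
  have hpoint : ∀ ω, (⨆ i, x i * ((∑ j ∈ Finset.range n, V i j ω) / n))
      ≤ (1 / n) * ∑ k ∈ Finset.range n,
          ⨆ i, x i * (((∑ j ∈ Finset.range n, V i j ω) - V i k ω) / m) := by
    intro ω
    apply ciSup_le
    intro i
    set S := ∑ j ∈ Finset.range n, V i j ω with hS
    have hSsum : ∑ k ∈ Finset.range n, (x i * ((S - V i k ω) / m))
        = n * (x i * (S / n)) := by
      rw [← Finset.mul_sum, ← Finset.sum_div, Finset.sum_sub_distrib,
        Finset.sum_const, Finset.card_range, ← hS, nsmul_eq_mul, hnm]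
      have hm0 : (m : ℝ) ≠ 0 := hmpos.ne'
      have hn0 : ((m : ℝ) + 1) ≠ 0 := by positivity
      push_cast
      field_simp
      ring
    have hstep : x i * (S / n)
        = (1 / n) * ∑ k ∈ Finset.range n, (x i * ((S - V i k ω) / m)) := by
      rw [hSsum]; field_simp
    rw [hstep]
    apply mul_le_mul_of_nonneg_left _ (by positivity)
    apply Finset.sum_le_sum
    intro k _
    exact le_ciSup
      (f := fun i => x i * (((∑ j ∈ Finset.range n, V i j ω) - V i k ω) / (m : ℝ)))
      (Set.Finite.bddAbove (Set.finite_range _)) i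
  -- integrate the pointwise inequality
  have hint_rhs : Integrable (fun ω => (1 / (n:ℝ)) * ∑ k ∈ Finset.range n,
      ⨆ i, x i * (((∑ j ∈ Finset.range n, V i j ω) - V i k ω) / m)) μ := by
    exact ((integrable_finset_sum _ fun k _ => hint_sup_k k).const_mul _)
  have h1 : ∫ ω, ⨆ i, x i * ((∑ j ∈ Finset.range n, V i j ω) / n) ∂μ
      ≤ ∫ ω, (1 / (n:ℝ)) * ∑ k ∈ Finset.range n,
          ⨆ i, x i * (((∑ j ∈ Finset.range n, V i j ω) - V i k ω) / m) ∂μ :=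
    integral_mono hint_sup_n hint_rhs hpoint
  -- compute the right-hand side
  have h2 : ∫ ω, (1 / (n:ℝ)) * ∑ k ∈ Finset.range n,
        ⨆ i, x i * (((∑ j ∈ Finset.range n, V i j ω) - V i k ω) / m) ∂μ
      = (1 / (n:ℝ)) * ∑ k ∈ Finset.range n,
        ∫ ω, ⨆ i, x i * (((∑ j ∈ Finset.range n, V i j ω) - V i k ω) / m) ∂μ := by
    rw [integral_const_mul, integral_finset_sum _ fun k _ => hint_sup_k k]
  -- each term equals the target integral
  have htarget : ∀ k < n,
      ∫ ω, ⨆ i, x i * (((∑ j ∈ Finset.range n, V i j ω) - V i k ω) / m) ∂μ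
        = ∫ ω, ⨆ i, x i * ((∑ j ∈ Finset.range (n - 1), V i j ω) / (n - 1)) ∂μ := by
    intro k hk
    have hidm : Function.Injective (fun j : Fin m => (j : ℕ)) := Fin.val_injective
    have lhs_eq : ∫ ω, ⨆ i, x i * (((∑ j ∈ Finset.range n, V i j ω) - V i k ω) / m) ∂μ
        = ∫ ω, G (fun p => V p.1 (e k p.2) ω) ∂μ := by
      refine integral_congr_ae (Filter.Eventually.of_forall fun ω => ?_)
      exact (hGe k hk ω).symm
    have rhs_eq : ∫ ω, ⨆ i, x i * ((∑ j ∈ Finset.range (n - 1), V i j ω) / (n - 1)) ∂μ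
        = ∫ ω, G (fun p => V p.1 ((p.2 : ℕ)) ω) ∂μ := by
      refine integral_congr_ae (Filter.Eventually.of_forall fun ω => ?_)
      have hterm : ∀ i : Fin d,
          (∑ j ∈ Finset.range (n - 1), V i j ω) / ((n : ℝ) - 1)
            = (∑ j : Fin m, V i (j : ℕ) ω) / (m : ℝ) := by
        intro i
        have h1 : (∑ j : Fin m, V i (j : ℕ) ω) = ∑ j ∈ Finset.range m, V i j ω :=
          Fin.sum_univ_eq_sum_range (fun j => V i j ω) m
        rw [h1, hm_def]
        congr 1
        rw [hnm]
        push_cast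
        ring
      simp only [hG_def]
      exact iSup_congr fun i => by rw [hterm i]
    rw [lhs_eq, rhs_eq, key (e k) (he_inj k),
      key (fun j : Fin m => (j : ℕ)) hidm]
  calc ∫ ω, ⨆ i, x i * ((∑ j ∈ Finset.range n, V i j ω) / n) ∂μ
      ≤ (1 / (n:ℝ)) * ∑ k ∈ Finset.range n,
          ∫ ω, ⨆ i, x i * (((∑ j ∈ Finset.range n, V i j ω) - V i k ω) / m) ∂μ := by
        rw [← h2]; exact h1
    _ = (1 / (n:ℝ)) * ∑ k ∈ Finset.range n,
          ∫ ω, ⨆ i, x i * ((∑ j ∈ Finset.range (n - 1), V i j ω) / (n - 1)) ∂μ := by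
        congr 1
        exact Finset.sum_congr rfl fun k hk => htarget k (Finset.mem_range.mp hk)
    _ = ∫ ω, ⨆ i, x i * ((∑ j ∈ Finset.range (n - 1), V i j ω) / (n - 1)) ∂μ := by
        rw [Finset.sum_const, Finset.card_range, nsmul_eq_mul]
        field_simp
end
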